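/- arXiv:1412.6419 — 8 statements merged into one kernel-verified Lean document; each statement's English description precedes it below -/
import Mathlib

section
/- Let $K$ be a number field of degree $n$. There is a constant $C$ depending only on $K$ such that for every real $H \geq 2$, the number of units $u \in \mathcal{O}_K^\times$ all of whose archimedean absolute values are at most $H$ is at most $C (\log H)^{r}$, where $r + 1$ is the number of archimedean places of $K$. -/
open NumberField
open scoped Classical

open NumberField.Units NumberField.Units.dirichletUnitTheorem NumberField.InfinitePlace Finset in
/-- The sum of `mult w * log (w u)` over all infinite places vanishes for a unit. -/
lemma aux_sum_mult_log_eq_zero {K : Type*} [Field K] [NumberField K] (x : (𝓞 K)ˣ) :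
    ∑ w : InfinitePlace K, (mult w : ℝ) * Real.log (w ((x : 𝓞 K) : K)) = 0 := by
  have h := congr_arg Real.log (prod_eq_abs_norm ((x : 𝓞 K) : K))
  rw [Units.norm, Rat.cast_one, Real.log_one, Real.log_prod] at h
  · simpa [Real.log_pow] using h
  · exact fun w _ => pow_ne_zero _ (AbsoluteValue.ne_zero _ (coe_ne_zero x))

open NumberField.Units NumberField.Units.dirichletUnitTheorem NumberField.InfinitePlace in
/-- From discreteness of the unit lattice, a small ball around zero contains only
the images of torsion units. -/
lemma aux_exists_eps (K : Type*) [Field K] [NumberField K] :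
    ∃ ε : ℝ, 0 < ε ∧ ∀ u : (𝓞 K)ˣ,
      ‖logEmbedding K (Additive.ofMul u)‖ < ε → u ∈ torsion K := by
  have h : IsOpen ({0} : Set (unitLattice K)) := isOpen_discrete _
  rw [Metric.isOpen_iff] at h
  obtain ⟨ε, hε, hball⟩ := h 0 rfl
  refine ⟨ε, hε, fun u hu => ?_⟩
  have hmem : logEmbedding K (Additive.ofMul u) ∈ unitLattice K :=
    ⟨Additive.ofMul u, trivial, rfl⟩
  have hball' : (⟨_, hmem⟩ : unitLattice K) ∈ Metric.ball (0 : unitLattice K) ε := by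
    rw [Metric.mem_ball, Subtype.dist_eq]
    simpa [dist_zero_right] using hu
  have h0 := hball hball'
  rw [Set.mem_singleton_iff, Subtype.ext_iff] at h0
  exact logEmbedding_eq_zero_iff.mp h0

open NumberField.Units NumberField.Units.dirichletUnitTheorem NumberField.InfinitePlace in
/-- Bound on the coordinates of the logarithmic embedding of a unit with all
archimedean absolute values at most `H`. -/
lemma aux_logEmbedding_bound {K : Type*} [Field K] [NumberField K] {H : ℝ} (hH : 2 ≤ H)
    {u : (𝓞 K)ˣ} (hu : ∀ v : InfinitePlace K, v ((u : 𝓞 K) : K) ≤ H)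
    (w : {w : InfinitePlace K // w ≠ w₀}) :
    |logEmbedding K (Additive.ofMul u) w| ≤ (Module.finrank ℚ K : ℝ) * Real.log H := by
  classical
  set n : ℕ := Module.finrank ℚ K with hn
  have hlogH : 0 ≤ Real.log H := Real.log_nonneg (by linarith)
  set L : InfinitePlace K → ℝ := fun v => (mult v : ℝ) * Real.log (v ((u : 𝓞 K) : K)) with hL
  have hpos : ∀ v : InfinitePlace K, 0 < v ((u : 𝓞 K) : K) := fun v =>
    pos_iff.mpr (coe_ne_zero u)
  have hle : ∀ v : InfinitePlace K, L v ≤ (mult v : ℝ) * Real.log H := fun v =>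
    mul_le_mul_of_nonneg_left (Real.log_le_log (hpos v) (hu v)) (Nat.cast_nonneg _)
  have hsum : ∑ v : InfinitePlace K, L v = 0 := aux_sum_mult_log_eq_zero u
  have hmult_le : ∀ v : InfinitePlace K, (mult v : ℝ) ≤ (n : ℝ) := by
    intro v
    have := Finset.single_le_sum (f := fun v : InfinitePlace K => mult v)
      (fun i _ => Nat.zero_le _) (Finset.mem_univ v)
    rw [sum_mult_eq] at this
    exact_mod_cast this
  have hsum_mult : ∑ v : InfinitePlace K, (mult v : ℝ) = (n : ℝ) := by
    rw [← Nat.cast_sum, sum_mult_eq]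
  have hupper : L w.val ≤ (n : ℝ) * Real.log H :=
    (hle w.val).trans (mul_le_mul_of_nonneg_right (hmult_le w.val) hlogH)
  have hlower : -((n : ℝ) * Real.log H) ≤ L w.val := by
    have herase : ∑ v ∈ Finset.univ.erase w.val, L v = - L w.val := by
      have := Finset.sum_erase_add Finset.univ L (Finset.mem_univ w.val)
      linarith [hsum, this]
    have h1 : ∑ v ∈ Finset.univ.erase w.val, L v ≤
        ∑ v ∈ Finset.univ.erase w.val, (mult v : ℝ) * Real.log H :=
      Finset.sum_le_sum (fun v _ => hle v)
    have h2 : ∑ v ∈ Finset.univ.erase w.val, (mult v : ℝ) * Real.log H ≤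
        ∑ v : InfinitePlace K, (mult v : ℝ) * Real.log H :=
      Finset.sum_le_sum_of_subset_of_nonneg (Finset.erase_subset _ _)
        (fun v _ _ => mul_nonneg (Nat.cast_nonneg _) hlogH)
    have h3 : ∑ v : InfinitePlace K, (mult v : ℝ) * Real.log H = (n : ℝ) * Real.log H := by
      rw [← Finset.sum_mul, hsum_mult]
    linarith [herase, h1, h2, h3]
  rw [logEmbedding_component, abs_le]
  exact ⟨hlower, hupper⟩

set_option maxHeartbeats 1000000 in
open NumberField.Units NumberField.Units.dirichletUnitTheorem NumberField.InfinitePlace in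
/-- The number of units of the ring of integers of a number field, all of whose
archimedean absolute values are at most `H`, is `O_K((log H)^r)` where `r + 1`
is the number of archimedean places. -/
theorem unit_count_bound (K : Type*) [Field K] [NumberField K] :
    ∃ C : ℝ, 0 < C ∧ ∀ H : ℝ, 2 ≤ H →
      (Set.ncard {u : (𝓞 K)ˣ | ∀ v : InfinitePlace K, v ((u : 𝓞 K) : K) ≤ H} : ℝ)
        ≤ C * (Real.log H) ^ (Fintype.card (InfinitePlace K) - 1) := by
  classical
  haveI : Fintype (torsion K) := Fintype.ofFinite _
  obtain ⟨ε, hε, hkey⟩ := aux_exists_eps K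
  set n : ℕ := Module.finrank ℚ K with hn
  have hn1 : 1 ≤ n := Module.finrank_pos
  set c : ℝ := ε / 2 with hc
  have hcpos : 0 < c := by positivity
  set t : ℕ := Fintype.card (torsion K) with ht
  have htpos : 0 < t := Fintype.card_pos
  set D : ℝ := 2 * n / c + 4 with hD
  have hDpos : 0 < D := by positivity
  set r' : ℕ := Fintype.card {w : InfinitePlace K // w ≠ w₀} with hr'
  have hcard : r' = Fintype.card (InfinitePlace K) - 1 := by
    rw [hr']
    have : (fun w : InfinitePlace K => w ≠ w₀) = fun w => ¬ (w = w₀) := rfl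
    rw [Fintype.card_subtype_compl, Fintype.card_subtype_eq]
  refine ⟨(t : ℝ) * D ^ r', by positivity, fun H hH => ?_⟩
  rw [← hcard]
  have hlogH : 0 ≤ Real.log H := Real.log_nonneg (by linarith)
  have hlogH2 : (1:ℝ)/2 ≤ Real.log H := by
    have h2 : (0.6931471803 : ℝ) < Real.log 2 := Real.log_two_gt_d9
    have := Real.log_le_log (by norm_num : (0:ℝ) < 2) hH
    linarith
  set S : Set (𝓞 K)ˣ := {u : (𝓞 K)ˣ | ∀ v : InfinitePlace K, v ((u : 𝓞 K) : K) ≤ H} with hS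
  rcases S.finite_or_infinite with hfin | hinf
  swap
  · rw [hinf.ncard]
    have h1 : (0:ℝ) ≤ Real.log H ^ r' := pow_nonneg hlogH r'
    have h2 : (0:ℝ) ≤ (t : ℝ) * D ^ r' := by positivity
    simp only [Nat.cast_zero]
    nlinarith
  -- finite case
  set M : ℝ := (n : ℝ) * Real.log H with hM
  have hMnn : 0 ≤ M := by positivity
  set B : ℤ := ⌊M / c⌋ with hB
  have hBnn : 0 ≤ B := Int.floor_nonneg.mpr (by positivity)
  set s : Finset (𝓞 K)ˣ := hfin.toFinset with hs
  have hmem : ∀ u : (𝓞 K)ˣ, u ∈ s ↔ ∀ v : InfinitePlace K, v ((u : 𝓞 K) : K) ≤ H := by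
    intro u; rw [hs, Set.Finite.mem_toFinset]; rfl
  set F : (𝓞 K)ˣ → ({w : InfinitePlace K // w ≠ w₀} → ℤ) :=
    fun u w => ⌊logEmbedding K (Additive.ofMul u) w / c⌋ with hF
  -- fibers of F on s have at most t elements
  have hfiber : ∀ a ∈ s.image F, (s.filter fun u => F u = a).card ≤ t := by
    intro a ha
    obtain ⟨u₀, hu₀s, hu₀a⟩ := Finset.mem_image.mp ha
    have hu₀ : u₀ ∈ s.filter fun u => F u = a := Finset.mem_filter.mpr ⟨hu₀s, hu₀a⟩
    have : (s.filter fun u => F u = a).card ≤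
        (Finset.univ.image ((↑) : torsion K → (𝓞 K)ˣ)).card := by
      apply Finset.card_le_card_of_injOn (fun u => u * u₀⁻¹)
      · intro u hu
        rw [Finset.mem_coe, Finset.mem_image]
        obtain ⟨hus, hua⟩ := Finset.mem_filter.mp hu
        suffices htor : u * u₀⁻¹ ∈ torsion K by
          exact ⟨⟨u * u₀⁻¹, htor⟩, Finset.mem_univ _, rfl⟩
        apply hkey
        have hdiff : logEmbedding K (Additive.ofMul (u * u₀⁻¹)) =
            logEmbedding K (Additive.ofMul u) - logEmbedding K (Additive.ofMul u₀) := by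
          rw [ofMul_mul, ofMul_inv, map_add, map_neg, sub_eq_add_neg]
        rw [hdiff]
        rw [pi_norm_lt_iff hε]
        intro w
        have hfl : ⌊logEmbedding K (Additive.ofMul u) w / c⌋ =
            ⌊logEmbedding K (Additive.ofMul u₀) w / c⌋ := by
          have := hua.trans hu₀a.symm
          exact congrFun this w
        have habs := Int.abs_sub_lt_one_of_floor_eq_floor hfl
        rw [div_sub_div_same, abs_div, abs_of_pos hcpos, div_lt_one hcpos] at habs
        calc ‖(logEmbedding K (Additive.ofMul u) - logEmbedding K (Additive.ofMul u₀)) w‖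
            = |logEmbedding K (Additive.ofMul u) w - logEmbedding K (Additive.ofMul u₀) w| := by
              simp [Real.norm_eq_abs]
          _ < c := habs
          _ < ε := by rw [hc]; linarith
      · intro u₁ _ u₂ _ h
        exact mul_right_cancel h
    calc (s.filter fun u => F u = a).card
        ≤ (Finset.univ.image ((↑) : torsion K → (𝓞 K)ˣ)).card := this
      _ ≤ t := (Finset.card_image_le).trans (le_of_eq (Finset.card_univ))
  have hcard_le : s.card ≤ t * (s.image F).card :=
    Finset.card_le_mul_card_image s t hfiber
  -- the image is contained in a box
  have himage : s.image F ⊆ Finset.Icc (fun _ => -(B + 1)) (fun _ => B) := by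
    intro a ha
    obtain ⟨u, hus, hua⟩ := Finset.mem_image.mp ha
    rw [Finset.mem_Icc]
    constructor <;> intro w <;> rw [← hua]
    · have hb := aux_logEmbedding_bound hH ((hmem u).mp hus) w
      have h1 : -(M / c) ≤ logEmbedding K (Additive.ofMul u) w / c := by
        rw [← neg_div, div_le_div_iff_of_pos_right hcpos]
        exact neg_le_of_abs_le hb
      rw [Int.le_floor]
      push_cast
      have h3 := Int.lt_floor_add_one (M / c)
      rw [← hB] at h3
      linarith
    · have hb := aux_logEmbedding_bound hH ((hmem u).mp hus) w
      have h1 : logEmbedding K (Additive.ofMul u) w / c ≤ M / c := by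
        rw [div_le_div_iff_of_pos_right hcpos]
        exact le_of_abs_le hb
      exact Int.le_floor.mpr (le_trans (Int.floor_le _) h1)
  have himcard : (s.image F).card ≤ ((2 * B + 2).toNat) ^ r' := by
    calc (s.image F).card ≤ (Finset.Icc (fun _ : {w : InfinitePlace K // w ≠ w₀} => -(B + 1))
          (fun _ => B)).card := Finset.card_le_card himage
      _ = ∏ _w : {w : InfinitePlace K // w ≠ w₀}, (Finset.Icc (-(B+1)) B).card := Pi.card_Icc _ _
      _ = ((2 * B + 2).toNat) ^ r' := by
          rw [Finset.prod_const, Int.card_Icc]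
          congr 2
          ring
  -- put everything together over ℝ
  have hSn : (Set.ncard S : ℝ) = (s.card : ℝ) := by
    rw [hs, Set.ncard_eq_toFinset_card S hfin]
  rw [hSn]
  clear_value n c t D r' S M B s F
  have hbox : ((2 * B + 2).toNat : ℝ) ≤ D * Real.log H := by
    have h1 : ((2 * B + 2).toNat : ℝ) = 2 * (B : ℝ) + 2 := by
      have h0 : ((2 * B + 2).toNat : ℤ) = 2 * B + 2 := Int.toNat_of_nonneg (by linarith)
      have h0' : (((2 * B + 2).toNat : ℤ) : ℝ) = ((2 * B + 2 : ℤ) : ℝ) := by rw [h0]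
      push_cast at h0'
      linarith
    have h2 : (B : ℝ) ≤ M / c := by rw [hB]; exact Int.floor_le _
    have h3 : 2 * (M / c) + 2 ≤ D * Real.log H := by
      rw [hD, hM]
      have h4 : 2 * ((n : ℝ) * Real.log H / c) = (2 * n / c) * Real.log H := by ring
      have h5 : (2:ℝ) ≤ 4 * Real.log H := by linarith
      rw [h4]; ring_nf; nlinarith [hlogH, hcpos, (by positivity : (0:ℝ) < 2 * (n:ℝ) / c)]
    rw [h1]
    linarith [h2, h3]
  calc (s.card : ℝ) ≤ (t : ℝ) * ((2 * B + 2).toNat : ℝ) ^ r' := by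
        exact_mod_cast hcard_le.trans (Nat.mul_le_mul_left t himcard)
    _ ≤ (t : ℝ) * (D * Real.log H) ^ r' := by
        apply mul_le_mul_of_nonneg_left _ (Nat.cast_nonneg _)
        exact pow_le_pow_left₀ (Nat.cast_nonneg _) hbox r'
    _ = (t : ℝ) * D ^ r' * Real.log H ^ r' := by rw [mul_pow]; ring
end

section
/- Let $K$ be a number field of degree $n$, and let $\mathfrak{a}$ be a nonzero fractional ideal of $K$. Let $c > 0$ be a constant. Then the number of elements $x \in \mathfrak{a}$ all of whose archimedean absolute values are at most $c$ satisfies the bound $O_{K,c}(1 + 1/N(\mathfrak{a}))$, where $N(\mathfrak{a})$ is the (multiplicative) norm of the fractional ideal. -/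
open NumberField

private lemma abs_sub_lt_of_floor_eq {a b ε : ℝ} (hε : 0 < ε)
    (h : ⌊a / ε⌋ = ⌊b / ε⌋) : |a - b| < ε := by
  have fa := Int.floor_le (a / ε)
  have fb := Int.floor_le (b / ε)
  have la := Int.lt_floor_add_one (a / ε)
  have lb := Int.lt_floor_add_one (b / ε)
  rw [h] at la fa
  have h1 : |a / ε - b / ε| < 1 := by rw [abs_sub_lt_iff]; constructor <;> linarith
  calc |a - b| = |a / ε - b / ε| * ε := by
        rw [div_sub_div_same, abs_div, abs_of_pos hε, div_mul_cancel₀ _ hε.ne']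
    _ < 1 * ε := mul_lt_mul_of_pos_right h1 hε
    _ = ε := one_mul ε

private lemma absNorm_le_of_mem {K : Type*} [Field K] [NumberField K]
    {𝔞 : FractionalIdeal (nonZeroDivisors (𝓞 K)) K} (h𝔞 : 𝔞 ≠ 0) {z : K}
    (hz : z ∈ 𝔞) (hz0 : z ≠ 0) :
    FractionalIdeal.absNorm 𝔞 ≤ |Algebra.norm ℚ z| := by
  have hspan : FractionalIdeal.spanSingleton (nonZeroDivisors (𝓞 K)) z ≤ 𝔞 :=
    FractionalIdeal.spanSingleton_le_iff_mem.mpr hz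
  have hJ : 𝔞⁻¹ * FractionalIdeal.spanSingleton (nonZeroDivisors (𝓞 K)) z ≤ 1 := by
    calc 𝔞⁻¹ * FractionalIdeal.spanSingleton (nonZeroDivisors (𝓞 K)) z
        ≤ 𝔞⁻¹ * 𝔞 := by gcongr
      _ = 1 := by rw [mul_comm]; exact mul_inv_cancel₀ h𝔞
  obtain ⟨I₀, hI₀⟩ := FractionalIdeal.le_one_iff_exists_coeIdeal.mp hJ
  have key : 𝔞 * (𝔞⁻¹ * FractionalIdeal.spanSingleton (nonZeroDivisors (𝓞 K)) z)
      = FractionalIdeal.spanSingleton (nonZeroDivisors (𝓞 K)) z := by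
    rw [← mul_assoc, mul_inv_cancel₀ h𝔞, one_mul]
  have hI₀0 : I₀ ≠ 0 := by
    rintro rfl
    have h0 : 𝔞⁻¹ * FractionalIdeal.spanSingleton (nonZeroDivisors (𝓞 K)) z = 0 := by
      rw [← hI₀]; simp
    exact hz0 (FractionalIdeal.spanSingleton_eq_zero_iff.mp
      (by rw [← key, h0, mul_zero]))
  have h1 : (1 : ℚ) ≤ (Ideal.absNorm I₀ : ℚ) := by
    have hne : Ideal.absNorm I₀ ≠ 0 := by
      simpa [Ideal.absNorm_eq_zero_iff, Submodule.zero_eq_bot] using hI₀0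
    exact_mod_cast Nat.one_le_iff_ne_zero.mpr hne
  have hmul : |Algebra.norm ℚ z|
      = FractionalIdeal.absNorm 𝔞 * (Ideal.absNorm I₀ : ℚ) := by
    rw [← FractionalIdeal.absNorm_span_singleton (R := 𝓞 K) z, ← key, map_mul, ← hI₀,
      FractionalIdeal.coeIdeal_absNorm]
  rw [hmul]
  exact le_mul_of_one_le_right (FractionalIdeal.absNorm_nonneg 𝔞) h1

/-- The number of elements of a nonzero fractional ideal `𝔞` of a number field
whose archimedean absolute values are all at most `c` is `O_{K,c}(1 + 1/N(𝔞))`. -/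
theorem fractional_ideal_small_elements (K : Type*) [Field K] [NumberField K]
    (c : ℝ) (hc : 0 < c) :
    ∃ C : ℝ, 0 < C ∧
      ∀ 𝔞 : FractionalIdeal (nonZeroDivisors (𝓞 K)) K, 𝔞 ≠ 0 →
        (Set.ncard {x : K | x ∈ 𝔞 ∧ ∀ v : InfinitePlace K, v x ≤ c} : ℝ)
          ≤ C * (1 + 1 / (FractionalIdeal.absNorm 𝔞 : ℝ)) := by
  classical
  set n := Module.finrank ℚ K with hn
  have hn0 : 0 < n := Module.finrank_pos
  refine ⟨(4 * c + 3) ^ n, by positivity, ?_⟩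
  intro 𝔞 h𝔞
  set S := {x : K | x ∈ 𝔞 ∧ ∀ v : InfinitePlace K, v x ≤ c} with hS
  set N : ℝ := ((FractionalIdeal.absNorm 𝔞 : ℚ) : ℝ) with hNdef
  have hNpos : 0 < N := by
    rw [hNdef]
    have h0 : FractionalIdeal.absNorm 𝔞 ≠ 0 :=
      fun h => h𝔞 (FractionalIdeal.absNorm_eq_zero_iff.mp h)
    have := lt_of_le_of_ne (FractionalIdeal.absNorm_nonneg 𝔞) (Ne.symm h0)
    exact_mod_cast this
  set t : ℝ := N ^ ((n : ℝ)⁻¹) with ht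
  have htpos : 0 < t := Real.rpow_pos_of_pos hNpos _
  have htn : t ^ n = N := by
    rw [ht, ← Real.rpow_natCast (N ^ ((n : ℝ)⁻¹)) n, ← Real.rpow_mul hNpos.le,
      inv_mul_cancel₀ (by exact_mod_cast hn0.ne' : (n : ℝ) ≠ 0), Real.rpow_one]
  set ε : ℝ := t / 2 with hε
  have hεpos : 0 < ε := by positivity
  -- separation: any nonzero element of 𝔞 has some place at least 2ε
  have sep : ∀ z : K, z ∈ 𝔞 → (∀ v : InfinitePlace K, v z < 2 * ε) → z = 0 := by
    intro z hzmem hzlt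
    by_contra hz0
    have h1 : N ≤ |((Algebra.norm ℚ z : ℚ) : ℝ)| := by
      rw [hNdef, ← Rat.cast_abs, Rat.cast_le]
      exact absNorm_le_of_mem h𝔞 hzmem hz0
    have h2 : |((Algebra.norm ℚ z : ℚ) : ℝ)|
        = ∏ v : InfinitePlace K, v z ^ v.mult := by
      rw [InfinitePlace.prod_eq_abs_norm, Rat.cast_abs]
    have h3 : ∏ v : InfinitePlace K, v z ^ v.mult
        < ∏ v : InfinitePlace K, (2 * ε) ^ v.mult := by
      refine Finset.prod_lt_prod_of_nonempty ?_ ?_ Finset.univ_nonempty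
      · intro v _
        have hv : 0 < v z := InfinitePlace.pos_iff.mpr hz0
        positivity
      · intro v _
        exact pow_lt_pow_left₀ (hzlt v) (apply_nonneg v z)
          InfinitePlace.mult_ne_zero
    have h4 : ∏ v : InfinitePlace K, (2 * ε) ^ v.mult = N := by
      rw [Finset.prod_pow_eq_pow_sum, InfinitePlace.sum_mult_eq, ← hn, hε,
        show 2 * (t / 2) = t by ring, htn]
    rw [h2] at h1
    rw [h4] at h3
    exact absurd (h1.trans_lt h3) (lt_irrefl N)
  -- the grid map
  set M : ℤ := ⌈c / ε⌉ with hM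
  have hM1 : (1 : ℤ) ≤ M := Int.ceil_pos.mpr (by positivity)
  have hMle : (M : ℝ) ≤ c / ε + 1 := (Int.ceil_lt_add_one _).le
  set f : K → (InfinitePlace K → ℤ × ℤ) := fun x v =>
    (⌊(v.embedding x).re / ε⌋, ⌊(v.embedding x).im / ε⌋) with hf
  set B : InfinitePlace K → Finset (ℤ × ℤ) := fun v =>
    (Finset.Icc (-M) M) ×ˢ (if v.IsReal then {0} else Finset.Icc (-M) M) with hB
  set T : Finset (InfinitePlace K → ℤ × ℤ) := Fintype.piFinset B with hT
  -- injectivity on S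
  have hinj : Set.InjOn f S := by
    intro x hx y hy hxy
    have hx1 : x ∈ (𝔞 : Submodule (𝓞 K) K) := hx.1
    have hy1 : y ∈ (𝔞 : Submodule (𝓞 K) K) := hy.1
    have hz' : x - y ∈ (𝔞 : Submodule (𝓞 K) K) := sub_mem hx1 hy1
    have hz : x - y ∈ 𝔞 := FractionalIdeal.mem_coe.mp hz'
    have hzero : x - y = 0 := by
      refine sep _ hz fun v => ?_
      have h1 : ⌊(v.embedding x).re / ε⌋ = ⌊(v.embedding y).re / ε⌋ :=
        congrArg Prod.fst (congrFun hxy v)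
      have h2 : ⌊(v.embedding x).im / ε⌋ = ⌊(v.embedding y).im / ε⌋ :=
        congrArg Prod.snd (congrFun hxy v)
      have hre : |(v.embedding x).re - (v.embedding y).re| < ε :=
        abs_sub_lt_of_floor_eq hεpos h1
      have him : |(v.embedding x).im - (v.embedding y).im| < ε :=
        abs_sub_lt_of_floor_eq hεpos h2
      have hve : v (x - y) = ‖v.embedding (x - y)‖ := (v.norm_embedding_eq _).symm
      rw [hve, map_sub]
      calc ‖v.embedding x - v.embedding y‖
          ≤ |(v.embedding x - v.embedding y).re| +
            |(v.embedding x - v.embedding y).im| := by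
            exact Complex.norm_le_abs_re_add_abs_im _
        _ = |(v.embedding x).re - (v.embedding y).re| +
            |(v.embedding x).im - (v.embedding y).im| := by
            rw [Complex.sub_re, Complex.sub_im]
        _ < ε + ε := add_lt_add hre him
        _ = 2 * ε := by ring
    exact sub_eq_zero.mp hzero
  -- the image is contained in T
  have hfloor : ∀ a : ℝ, |a| ≤ c → ⌊a / ε⌋ ∈ Finset.Icc (-M) M := by
    intro a ha
    rw [abs_le] at ha
    have hcM : (c / ε : ℝ) ≤ (M : ℝ) := Int.le_ceil _
    have h1 : a / ε ≤ c / ε := by gcongr; exact ha.2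
    have h2 : -(c / ε) ≤ a / ε := by
      rw [← neg_div]; gcongr; exact ha.1
    rw [Finset.mem_Icc]
    refine ⟨?_, ?_⟩
    · rw [Int.le_floor]
      push_cast
      linarith
    · have h3 := Int.floor_le (a / ε)
      exact_mod_cast h3.trans (h1.trans hcM)
  have hmaps : ∀ x ∈ S, f x ∈ T := by
    intro x hx
    rw [hT, Fintype.mem_piFinset]
    intro v
    simp only [hf, hB]
    have hnorm : ‖v.embedding x‖ ≤ c := by rw [v.norm_embedding_eq]; exact hx.2 v
    have hre : |(v.embedding x).re| ≤ c := (Complex.abs_re_le_norm _).trans hnorm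
    have him : |(v.embedding x).im| ≤ c := (Complex.abs_im_le_norm _).trans hnorm
    rw [Finset.mem_product]
    refine ⟨hfloor _ hre, ?_⟩
    by_cases hv : v.IsReal
    · rw [if_pos hv, Finset.mem_singleton]
      have him0 : (v.embedding x).im = 0 := by
        rw [← InfinitePlace.embedding_of_isReal_apply hv, Complex.ofReal_im]
      rw [him0, zero_div, Int.floor_zero]
    · rw [if_neg hv]
      exact hfloor _ him
  -- cardinality bound
  have hcard : S.ncard ≤ T.card := by
    have hmaps' : ∀ a ∈ S, f a ∈ (T : Set (InfinitePlace K → ℤ × ℤ)) :=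
      fun a ha => hmaps a ha
    have h := Set.ncard_le_ncard_of_injOn f hmaps' hinj T.finite_toSet
    rwa [Set.ncard_coe_finset] at h
  have hBcard : ∀ v : InfinitePlace K, (B v).card = (M + 1 - -M).toNat ^ v.mult := by
    intro v
    rw [hB]
    simp only
    rw [Finset.card_product, Int.card_Icc]
    by_cases hv : v.IsReal
    · rw [if_pos hv, Finset.card_singleton, InfinitePlace.mult, if_pos hv, pow_one,
        mul_one]
    · rw [if_neg hv, Int.card_Icc, InfinitePlace.mult, if_neg hv, sq]
  have hTcard : T.card = (M + 1 - -M).toNat ^ n := by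
    rw [hT, Fintype.card_piFinset]
    rw [Finset.prod_congr rfl (fun v _ => hBcard v), Finset.prod_pow_eq_pow_sum,
      InfinitePlace.sum_mult_eq, ← hn]
  have hKcast : (((M + 1 - -M).toNat : ℤ) : ℝ) = 2 * (M : ℝ) + 1 := by
    rw [Int.toNat_of_nonneg (by omega)]
    push_cast
    ring
  -- final estimate
  have hmain : ((M + 1 - -M).toNat : ℝ) ^ n ≤ (4 * c + 3) ^ n * (1 + 1 / N) := by
    have hKval : ((M + 1 - -M).toNat : ℝ) = 2 * (M : ℝ) + 1 := by
      exact_mod_cast hKcast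
    have hcε : c / ε = 2 * c / t := by rw [hε]; ring
    have hKle : ((M + 1 - -M).toNat : ℝ) ≤ 4 * c / t + 3 := by
      rw [hKval]
      rw [hcε] at hMle
      have h42 : 4 * c / t = 2 * (2 * c / t) := by ring
      linarith
    have hKnn : (0 : ℝ) ≤ ((M + 1 - -M).toNat : ℝ) := Nat.cast_nonneg _
    rcases le_total 1 t with h1t | ht1
    · -- N ≥ 1 : bound by constant
      have hb : ((M + 1 - -M).toNat : ℝ) ≤ 4 * c + 3 := by
        have : 4 * c / t ≤ 4 * c := div_le_self (by positivity) h1t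
        linarith
      have hp : ((M + 1 - -M).toNat : ℝ) ^ n ≤ (4 * c + 3) ^ n :=
        pow_le_pow_left₀ hKnn hb n
      have h1N : (1 : ℝ) ≤ 1 + 1 / N := by
        have : 0 < 1 / N := by positivity
        linarith
      calc ((M + 1 - -M).toNat : ℝ) ^ n ≤ (4 * c + 3) ^ n := hp
        _ = (4 * c + 3) ^ n * 1 := (mul_one _).symm
        _ ≤ (4 * c + 3) ^ n * (1 + 1 / N) := by
            exact mul_le_mul_of_nonneg_left h1N (by positivity)
    · -- N ≤ 1 : bound by constant / N
      have hb : ((M + 1 - -M).toNat : ℝ) * t ≤ 4 * c + 3 := by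
        have h4 : 4 * c / t * t = 4 * c := div_mul_cancel₀ _ htpos.ne'
        have := mul_le_mul_of_nonneg_right hKle htpos.le
        nlinarith [htpos]
      have hp : (((M + 1 - -M).toNat : ℝ) * t) ^ n ≤ (4 * c + 3) ^ n :=
        pow_le_pow_left₀ (by positivity) hb n
      rw [mul_pow, htn] at hp
      have hdiv : ((M + 1 - -M).toNat : ℝ) ^ n ≤ (4 * c + 3) ^ n / N := by
        rw [le_div_iff₀ hNpos]
        exact hp
      calc ((M + 1 - -M).toNat : ℝ) ^ n ≤ (4 * c + 3) ^ n / N := hdiv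
        _ = (4 * c + 3) ^ n * (1 / N) := by ring
        _ ≤ (4 * c + 3) ^ n * (1 + 1 / N) := by
            refine mul_le_mul_of_nonneg_left ?_ (by positivity)
            linarith
  calc (S.ncard : ℝ) ≤ (T.card : ℝ) := by exact_mod_cast hcard
    _ = ((M + 1 - -M).toNat : ℝ) ^ n := by rw [hTcard]; push_cast; ring
    _ ≤ (4 * c + 3) ^ n * (1 + 1 / N) := hmain
end

section
/- For positive reals $A_1, \ldots, A_n, B$, define $I(A_1, \ldots, A_n, B) = \mathrm{vol}\{(x_1,\ldots,x_n) \in \mathbb{R}^n : 0 \leq x_i \leq A_i \text{ for all } i,\ x_1 \cdots x_n \leq B\}$. Then $I(A_1, \ldots, A_n, B) \ll_n B \cdot \left(\log\left(\frac{A_1 \cdots A_n}{B} + 2\right)\right)^{n-1}$, with an implied constant depending only on $n$. -/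
open MeasureTheory Real ENNReal

set_option maxHeartbeats 1000000

lemma tail_shift (c : ℕ) (f : ℕ → ℝ≥0∞) (hf : ∀ j, j < c → f j = 0)
    (hf2 : ∀ j, c ≤ j → f j = 2⁻¹ ^ j) :
    ∑' j : ℕ, f j = 2⁻¹ ^ c * 2 := by
  have key : ∑' j : ℕ, f j = ∑' j : ℕ, (2 : ℝ≥0∞)⁻¹ ^ (j + c) := by
    apply tsum_eq_tsum_of_ne_zero_bij (fun x => x.1 + c)
    · intro x y hxy
      simpa [Subtype.ext_iff] using hxy
    · intro j hj
      rcases Nat.lt_or_ge j c with h | h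
      · exact absurd (hf j h) hj
      · exact ⟨⟨j - c, Function.mem_support.mpr
            (pow_ne_zero _ (ENNReal.inv_ne_zero.mpr (by norm_num)))⟩,
          by simp [Nat.sub_add_cancel h]⟩
    · intro x
      rw [hf2 _ (Nat.le_add_left c x.1)]
  rw [key]
  have : ∀ j : ℕ, (2 : ℝ≥0∞)⁻¹ ^ (j + c) = 2⁻¹ ^ c * 2⁻¹ ^ j := by
    intro j; rw [pow_add]; ring
  simp_rw [this]
  rw [ENNReal.tsum_mul_left, ENNReal.tsum_geometric, ENNReal.one_sub_inv_two, inv_inv]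

lemma geom_tail (m : ℕ) :
    ∑' j : ℕ, (if m ≤ j then (2 : ℝ≥0∞)⁻¹ ^ j else 0) ≤ 2 * 2⁻¹ ^ m := by
  rw [tail_shift m _ (fun j hj => if_neg (Nat.not_le.mpr hj)) (fun j hj => if_pos hj),
    mul_comm]

lemma geom_conv (m : ℕ) :
    ∑' j : ℕ, (2 : ℝ≥0∞)⁻¹ ^ j * 2⁻¹ ^ (m - j) ≤ ((m : ℝ≥0∞) + 2) * 2⁻¹ ^ m := by
  have split : ∀ j : ℕ, (2 : ℝ≥0∞)⁻¹ ^ j * 2⁻¹ ^ (m - j)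
      = (if j ≤ m then (2 : ℝ≥0∞)⁻¹ ^ m else 0)
        + (if m + 1 ≤ j then (2 : ℝ≥0∞)⁻¹ ^ j else 0) := by
    intro j
    rcases le_or_gt j m with h | h
    · rw [if_pos h, if_neg (by omega), add_zero, ← pow_add, Nat.add_sub_cancel' h]
    · rw [if_neg (by omega), if_pos (by omega : m + 1 ≤ j), zero_add,
        Nat.sub_eq_zero_of_le h.le, pow_zero, mul_one]
  rw [tsum_congr split, ENNReal.tsum_add]
  have h1 : ∑' j : ℕ, (if j ≤ m then (2 : ℝ≥0∞)⁻¹ ^ m else 0)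
      = ((m : ℝ≥0∞) + 1) * 2⁻¹ ^ m := by
    rw [tsum_eq_sum (s := Finset.range (m + 1))
      (fun j hj => if_neg (fun h => hj (Finset.mem_range.mpr (Nat.lt_succ_of_le h))))]
    rw [Finset.sum_congr rfl
      (fun j hj => if_pos (Nat.lt_succ_iff.mp (Finset.mem_range.mp hj))), Finset.sum_const,
      Finset.card_range, nsmul_eq_mul]
    push_cast; ring
  have h2 : ∑' j : ℕ, (if m + 1 ≤ j then (2 : ℝ≥0∞)⁻¹ ^ j else 0)
      = 2⁻¹ ^ (m + 1) * 2 := tail_shift (m + 1) _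
      (fun j hj => if_neg (Nat.not_le.mpr hj)) (fun j hj => if_pos hj)
  rw [h1, h2]
  have h3 : (2 : ℝ≥0∞)⁻¹ ^ (m + 1) * 2 = 2⁻¹ ^ m := by
    rw [pow_succ, mul_assoc, ENNReal.inv_mul_cancel (by norm_num) (by norm_num), mul_one]
  rw [h3]
  calc ((m : ℝ≥0∞) + 1) * 2⁻¹ ^ m + 2⁻¹ ^ m = ((m : ℝ≥0∞) + 2) * 2⁻¹ ^ m := by ring
    _ ≤ ((m : ℝ≥0∞) + 2) * 2⁻¹ ^ m := le_refl _

lemma sumT : ∀ n m : ℕ,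
    ∑' k : Fin (n + 1) → ℕ, (if m ≤ ∑ i, k i then (2 : ℝ≥0∞)⁻¹ ^ (∑ i, k i) else 0)
      ≤ 4 ^ (n + 1) * ((m : ℝ≥0∞) + 1) ^ n * 2⁻¹ ^ m := by
  intro n
  induction n with
  | zero =>
    intro m
    have he : ∀ k : Fin 1 → ℕ, ∑ i, k i = k 0 := by
      intro k; simp
    calc ∑' k : Fin 1 → ℕ, (if m ≤ ∑ i, k i then (2 : ℝ≥0∞)⁻¹ ^ (∑ i, k i) else 0)
        = ∑' j : ℕ, (if m ≤ j then (2 : ℝ≥0∞)⁻¹ ^ j else 0) := by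
          rw [← (Equiv.funUnique (Fin 1) ℕ).tsum_eq
            (fun j => if m ≤ j then (2 : ℝ≥0∞)⁻¹ ^ j else 0)]
          apply tsum_congr
          intro k
          simp [he k, Equiv.funUnique]
      _ ≤ 2 * 2⁻¹ ^ m := geom_tail m
      _ ≤ 4 ^ (0 + 1) * ((m : ℝ≥0∞) + 1) ^ 0 * 2⁻¹ ^ m := by
          rw [pow_zero, mul_one, pow_one]; gcongr <;> norm_num
  | succ n ih =>
    intro m
    set e := ((Fin.consEquiv (fun _ : Fin (n+2) => ℕ)).symm) with he
    have step1 : ∑' k : Fin (n + 2) → ℕ,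
        (if m ≤ ∑ i, k i then (2 : ℝ≥0∞)⁻¹ ^ (∑ i, k i) else 0)
        = ∑' (a : ℕ) (b : Fin (n + 1) → ℕ),
          (if m ≤ a + ∑ i, b i then (2 : ℝ≥0∞)⁻¹ ^ (a + ∑ i, b i) else 0) := by
      rw [← ENNReal.tsum_prod]
      apply (e.symm.tsum_eq _).symm.trans
      apply tsum_congr
      intro p
      have hs : ∑ i, (e.symm p) i = p.1 + ∑ i, p.2 i := by
        rw [Fin.sum_univ_succ]
        simp [he, Fin.consEquiv]
      rw [hs]
    rw [step1]
    have inner : ∀ a : ℕ, ∑' b : Fin (n + 1) → ℕ,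
        (if m ≤ a + ∑ i, b i then (2 : ℝ≥0∞)⁻¹ ^ (a + ∑ i, b i) else 0)
        ≤ 2⁻¹ ^ a * (4 ^ (n + 1) * ((m : ℝ≥0∞) + 1) ^ n * 2⁻¹ ^ (m - a)) := by
      intro a
      have hpt : ∀ b : Fin (n + 1) → ℕ,
          (if m ≤ a + ∑ i, b i then (2 : ℝ≥0∞)⁻¹ ^ (a + ∑ i, b i) else 0)
          = 2⁻¹ ^ a * (if m - a ≤ ∑ i, b i then (2 : ℝ≥0∞)⁻¹ ^ (∑ i, b i) else 0) := by
        intro b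
        have hiff : (m ≤ a + ∑ i, b i) ↔ (m - a ≤ ∑ i, b i) := by omega
        by_cases h : m - a ≤ ∑ i, b i
        · rw [if_pos (hiff.mpr h), if_pos h, pow_add]
        · rw [if_neg (fun hc => h (hiff.mp hc)), if_neg h, mul_zero]
      simp_rw [hpt]
      rw [ENNReal.tsum_mul_left]
      gcongr
      calc ∑' b : Fin (n + 1) → ℕ, (if m - a ≤ ∑ i, b i then (2 : ℝ≥0∞)⁻¹ ^ (∑ i, b i) else 0)
          ≤ 4 ^ (n + 1) * (((m - a : ℕ) : ℝ≥0∞) + 1) ^ n * 2⁻¹ ^ (m - a) := ih (m - a)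
        _ ≤ 4 ^ (n + 1) * ((m : ℝ≥0∞) + 1) ^ n * 2⁻¹ ^ (m - a) := by
            have hc : (((m - a : ℕ)) : ℝ≥0∞) ≤ (m : ℝ≥0∞) := Nat.cast_le.mpr (Nat.sub_le m a)
            gcongr
    calc ∑' (a : ℕ) (b : Fin (n + 1) → ℕ),
          (if m ≤ a + ∑ i, b i then (2 : ℝ≥0∞)⁻¹ ^ (a + ∑ i, b i) else 0)
        ≤ ∑' a : ℕ, 2⁻¹ ^ a * (4 ^ (n + 1) * ((m : ℝ≥0∞) + 1) ^ n * 2⁻¹ ^ (m - a)) :=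
          ENNReal.tsum_le_tsum inner
      _ = 4 ^ (n + 1) * ((m : ℝ≥0∞) + 1) ^ n * ∑' a : ℕ, 2⁻¹ ^ a * 2⁻¹ ^ (m - a) := by
          rw [← ENNReal.tsum_mul_left]
          apply tsum_congr; intro a; ring
      _ ≤ 4 ^ (n + 1) * ((m : ℝ≥0∞) + 1) ^ n * (((m : ℝ≥0∞) + 2) * 2⁻¹ ^ m) := by
          gcongr
          exact geom_conv m
      _ ≤ 4 ^ (n + 2) * ((m : ℝ≥0∞) + 1) ^ (n + 1) * 2⁻¹ ^ m := by
          rw [pow_succ (4 : ℝ≥0∞), pow_succ ((m : ℝ≥0∞) + 1)]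
          calc 4 ^ (n + 1) * ((m : ℝ≥0∞) + 1) ^ n * (((m : ℝ≥0∞) + 2) * 2⁻¹ ^ m)
              ≤ 4 ^ (n + 1) * ((m : ℝ≥0∞) + 1) ^ n * ((4 * ((m : ℝ≥0∞) + 1)) * 2⁻¹ ^ m) := by
                gcongr
                calc (m : ℝ≥0∞) + 2 ≤ 4 * (m : ℝ≥0∞) + 4 := by
                      have : (2 : ℝ≥0∞) ≤ 4 := by norm_num
                      calc (m : ℝ≥0∞) + 2 ≤ 4 * (m : ℝ≥0∞) + 2 := by
                            gcongr; exact le_mul_of_one_le_left zero_le (by norm_num)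
                        _ ≤ 4 * (m : ℝ≥0∞) + 4 := by gcongr
                  _ = 4 * ((m : ℝ≥0∞) + 1) := by ring
            _ = 4 ^ (n + 1) * 4 * (((m : ℝ≥0∞) + 1) ^ n * ((m : ℝ≥0∞) + 1)) * 2⁻¹ ^ m := by
                ring

lemma prod_box_eq (n' : ℕ) (A : Fin (n' + 1) → ℝ) (k : Fin (n' + 1) → ℕ) :
    ∏ i, (A i * (2⁻¹ : ℝ) ^ (k i + 1)) = (∏ i, A i) * (2⁻¹ : ℝ) ^ (∑ i, k i + (n' + 1)) := by
  rw [Finset.prod_mul_distrib, Finset.prod_pow_eq_pow_sum]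
  congr 2
  rw [Finset.sum_add_distrib, Finset.sum_const, Finset.card_univ]
  simp

/-- The volume of the region `0 ≤ xᵢ ≤ Aᵢ`, `x₁⋯xₙ ≤ B` is
`≪_n B (log(A₁⋯Aₙ/B + 2))^{n-1}`. -/
theorem volume_box_product_bound (n : ℕ) (hn : 1 ≤ n) :
    ∃ C : ℝ, 0 < C ∧ ∀ (A : Fin n → ℝ) (B : ℝ), (∀ i, 0 < A i) → 0 < B →
      (volume {x : Fin n → ℝ |
          (∀ i, x i ∈ Set.Icc 0 (A i)) ∧ ∏ i, x i ≤ B}).toReal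
        ≤ C * B * (Real.log ((∏ i, A i) / B + 2)) ^ (n - 1) := by
  obtain ⟨n', rfl⟩ : ∃ n', n = n' + 1 := ⟨n - 1, by omega⟩
  have hlog2 : 0 < Real.log 2 := Real.log_pos (by norm_num)
  refine ⟨4 ^ (n' + 1) * (3 / Real.log 2) ^ n', by positivity, ?_⟩
  intro A B hA hB
  simp only [Nat.add_sub_cancel]
  set P := ∏ i, A i with hPdef
  have hP : 0 < P := Finset.prod_pos (fun i _ => hA i)
  have hPB : 0 < P / B := div_pos hP hB
  set L := Real.logb 2 (P / B) with hLdef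
  set m := ⌈L - ((n' + 1 : ℕ) : ℝ)⌉₊ with hmdef
  set ℓ := Real.log (P / B + 2) with hldef
  have hℓ2 : Real.log 2 ≤ ℓ := Real.log_le_log (by norm_num) (by linarith)
  have hℓ : 0 < ℓ := lt_of_lt_of_le hlog2 hℓ2
  -- Key 1 : P ≤ 2 ^ (m + (n' + 1)) * B
  have key1 : P ≤ 2 ^ (m + (n' + 1)) * B := by
    have h1 : L ≤ ((m + (n' + 1) : ℕ) : ℝ) := by
      have h0 : L - ((n' + 1 : ℕ) : ℝ) ≤ (m : ℝ) := Nat.le_ceil _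
      push_cast at h0 ⊢
      linarith
    have h2 : P / B ≤ 2 ^ (m + (n' + 1)) := by
      calc P / B = (2 : ℝ) ^ L := (Real.rpow_logb two_pos (by norm_num) hPB).symm
        _ ≤ (2 : ℝ) ^ (((m + (n' + 1) : ℕ) : ℝ)) :=
            Real.rpow_le_rpow_of_exponent_le one_le_two h1
        _ = 2 ^ (m + (n' + 1)) := Real.rpow_natCast 2 _
    calc P = (P / B) * B := by field_simp
      _ ≤ 2 ^ (m + (n' + 1)) * B := by gcongr
  -- Key 2 : (m : ℝ) + 1 ≤ 3 / log 2 * ℓ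
  have hlogb : L ≤ ℓ / Real.log 2 := by
    rw [hLdef, Real.logb]
    gcongr
    exact Real.log_le_log hPB (by linarith)
  have key2 : (m : ℝ) + 1 ≤ 3 / Real.log 2 * ℓ := by
    have hrw : 3 / Real.log 2 * ℓ = 3 * (ℓ / Real.log 2) := by ring
    have h1ℓ : 1 ≤ ℓ / Real.log 2 := (one_le_div hlog2).mpr hℓ2
    by_cases hm0 : m = 0
    · rw [hm0, hrw]; push_cast; linarith
    · have hx : 0 < L - ((n' + 1 : ℕ) : ℝ) := by
        by_contra h
        push_neg at h
        exact hm0 (Nat.ceil_eq_zero.mpr h)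
      have h2 : (m : ℝ) < L - ((n' + 1 : ℕ) : ℝ) + 1 := Nat.ceil_lt_add_one hx.le
      have h3 : (1 : ℝ) ≤ ((n' + 1 : ℕ) : ℝ) := by exact_mod_cast Nat.one_le_iff_ne_zero.mpr (by omega)
      rw [hrw]
      linarith
  -- the dyadic boxes
  set Box : (Fin (n' + 1) → ℕ) → Set (Fin (n' + 1) → ℝ) := fun k =>
    Set.univ.pi fun i => Set.Ioc (A i * (2⁻¹ : ℝ) ^ (k i + 1)) (A i * (2⁻¹ : ℝ) ^ (k i))
    with hBoxdef
  have hhalf : ENNReal.ofReal ((2 : ℝ)⁻¹) = 2⁻¹ := by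
    rw [ENNReal.ofReal_inv_of_pos two_pos, ENNReal.ofReal_ofNat]
  have hBoxVol : ∀ k, volume (Box k)
      = ENNReal.ofReal P * 2⁻¹ ^ (n' + 1) * 2⁻¹ ^ (∑ i, k i) := by
    intro k
    rw [hBoxdef]
    simp only []
    rw [volume_pi_pi]
    have h1 : ∀ i : Fin (n' + 1),
        volume (Set.Ioc (A i * (2⁻¹ : ℝ) ^ (k i + 1)) (A i * (2⁻¹ : ℝ) ^ (k i)))
        = ENNReal.ofReal (A i * (2⁻¹ : ℝ) ^ (k i + 1)) := by
      intro i
      rw [Real.volume_Ioc]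
      congr 1
      rw [pow_succ]
      ring
    rw [Finset.prod_congr rfl (fun i _ => h1 i),
      ← ENNReal.ofReal_prod_of_nonneg (fun i _ => by have := (hA i).le; positivity),
      prod_box_eq n' A k, ENNReal.ofReal_mul hP.le, ENNReal.ofReal_pow (by norm_num), hhalf,
      pow_add, mul_comm ((2 : ℝ≥0∞)⁻¹ ^ (∑ i, k i)) _, mul_assoc]
  -- covering
  have cover : {x : Fin (n' + 1) → ℝ |
        (∀ i, x i ∈ Set.Icc 0 (A i)) ∧ ∏ i, x i ≤ B}
      ⊆ (⋃ i, {x : Fin (n' + 1) → ℝ | x i = 0})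
        ∪ ⋃ k : Fin (n' + 1) → ℕ, (if m ≤ ∑ i, k i then Box k else ∅) := by
    rintro x ⟨hxI, hxP⟩
    by_cases hz : ∃ i, x i = 0
    · exact Or.inl (Set.mem_iUnion.mpr hz)
    · right
      push_neg at hz
      have hxpos : ∀ i, 0 < x i := fun i => lt_of_le_of_ne (hxI i).1 (Ne.symm (hz i))
      set K : Fin (n' + 1) → ℕ := fun i => ⌊Real.logb 2 (A i / x i)⌋₊ with hKdef
      have hmem : ∀ i, x i ∈ Set.Ioc (A i * (2⁻¹ : ℝ) ^ (K i + 1)) (A i * (2⁻¹ : ℝ) ^ (K i)) := by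
        intro i
        have hr1 : 1 ≤ A i / x i := (one_le_div (hxpos i)).mpr (hxI i).2
        have hrpos : 0 < A i / x i := lt_of_lt_of_le one_pos hr1
        have hlb : 0 ≤ Real.logb 2 (A i / x i) := Real.logb_nonneg one_lt_two hr1
        constructor
        · have h2 : A i / x i < 2 ^ (K i + 1) := by
            have h3 : Real.logb 2 (A i / x i) < ((K i + 1 : ℕ) : ℝ) := by
              have h4 := Nat.lt_floor_add_one (Real.logb 2 (A i / x i))
              push_cast
              push_cast at h4
              exact h4
            calc A i / x i = (2 : ℝ) ^ Real.logb 2 (A i / x i) :=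
                  (Real.rpow_logb two_pos (by norm_num) hrpos).symm
              _ < (2 : ℝ) ^ (((K i + 1 : ℕ)) : ℝ) :=
                  Real.rpow_lt_rpow_of_exponent_lt one_lt_two h3
              _ = 2 ^ (K i + 1) := Real.rpow_natCast 2 _
          rw [div_lt_iff₀ (hxpos i)] at h2
          calc A i * (2⁻¹ : ℝ) ^ (K i + 1) < (2 ^ (K i + 1) * x i) * (2⁻¹ : ℝ) ^ (K i + 1) :=
                mul_lt_mul_of_pos_right h2 (by positivity)
            _ = x i := by
                rw [inv_pow]
                field_simp
        · have h2 : (2 : ℝ) ^ (K i) ≤ A i / x i := by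
            have h3 : ((K i : ℕ) : ℝ) ≤ Real.logb 2 (A i / x i) := Nat.floor_le hlb
            calc (2 : ℝ) ^ (K i) = (2 : ℝ) ^ (((K i : ℕ)) : ℝ) := (Real.rpow_natCast 2 _).symm
              _ ≤ (2 : ℝ) ^ Real.logb 2 (A i / x i) :=
                  Real.rpow_le_rpow_of_exponent_le one_le_two h3
              _ = A i / x i := Real.rpow_logb two_pos (by norm_num) hrpos
          rw [le_div_iff₀ (hxpos i)] at h2
          calc x i = (2 ^ (K i) * x i) * (2⁻¹ : ℝ) ^ (K i) := by
                rw [inv_pow]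
                field_simp
            _ ≤ A i * (2⁻¹ : ℝ) ^ (K i) := mul_le_mul_of_nonneg_right h2 (by positivity)
      have hprod : P * (2⁻¹ : ℝ) ^ (∑ i, K i + (n' + 1)) < B := by
        have hlt : ∏ i, (A i * (2⁻¹ : ℝ) ^ (K i + 1)) < ∏ i, x i :=
          Finset.prod_lt_prod_of_nonempty (fun i _ => by have := hA i; positivity)
            (fun i _ => (hmem i).1) Finset.univ_nonempty
        rw [prod_box_eq n' A K] at hlt
        exact lt_of_lt_of_le hlt hxP
      have hsum : m ≤ ∑ i, K i := by
        rw [hmdef]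
        apply Nat.ceil_le.mpr
        have hpow : (0:ℝ) < 2 ^ (∑ i, K i + (n' + 1)) := by positivity
        have h4 : P / B < 2 ^ (∑ i, K i + (n' + 1)) := by
          rw [div_lt_iff₀ hB]
          have h5 : (2⁻¹ : ℝ) ^ (∑ i, K i + (n' + 1)) * 2 ^ (∑ i, K i + (n' + 1)) = 1 := by
            rw [inv_pow, inv_mul_cancel₀ (by positivity)]
          calc P = P * ((2⁻¹ : ℝ) ^ (∑ i, K i + (n' + 1)) * 2 ^ (∑ i, K i + (n' + 1))) := by
                rw [h5, mul_one]
            _ = (P * (2⁻¹ : ℝ) ^ (∑ i, K i + (n' + 1))) * 2 ^ (∑ i, K i + (n' + 1)) := by ring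
            _ < B * 2 ^ (∑ i, K i + (n' + 1)) := by
                exact mul_lt_mul_of_pos_right hprod hpow
            _ = 2 ^ (∑ i, K i + (n' + 1)) * B := mul_comm _ _
        have h6 : L < ((∑ i, K i + (n' + 1) : ℕ) : ℝ) := by
          calc L < Real.logb 2 (2 ^ (∑ i, K i + (n' + 1))) :=
                Real.logb_lt_logb one_lt_two hPB (by exact_mod_cast h4)
            _ = ((∑ i, K i + (n' + 1) : ℕ) : ℝ) := by
                rw [← Real.rpow_natCast 2 (∑ i, K i + (n' + 1)),
                  Real.logb_rpow two_pos (by norm_num)]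
        push_cast at h6 ⊢
        linarith
      refine Set.mem_iUnion.mpr ⟨K, ?_⟩
      rw [if_pos hsum]
      exact Set.mem_univ_pi.mpr hmem
  -- null set
  have hnull : volume (⋃ i, {x : Fin (n' + 1) → ℝ | x i = 0}) = 0 :=
    measure_iUnion_null fun i => by
      rw [MeasureTheory.volume_pi]
      exact Measure.pi_hyperplane _ i 0
  -- main chain in ℝ≥0∞
  have main : volume {x : Fin (n' + 1) → ℝ |
        (∀ i, x i ∈ Set.Icc 0 (A i)) ∧ ∏ i, x i ≤ B}
      ≤ ENNReal.ofReal ((4 ^ (n' + 1) * (3 / Real.log 2) ^ n') * B * ℓ ^ n') := by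
    calc volume {x : Fin (n' + 1) → ℝ | (∀ i, x i ∈ Set.Icc 0 (A i)) ∧ ∏ i, x i ≤ B}
        ≤ volume ((⋃ i, {x : Fin (n' + 1) → ℝ | x i = 0})
            ∪ ⋃ k : Fin (n' + 1) → ℕ, (if m ≤ ∑ i, k i then Box k else ∅)) :=
          measure_mono cover
      _ ≤ volume (⋃ i, {x : Fin (n' + 1) → ℝ | x i = 0})
            + volume (⋃ k : Fin (n' + 1) → ℕ, (if m ≤ ∑ i, k i then Box k else ∅)) :=
          measure_union_le _ _
      _ = volume (⋃ k : Fin (n' + 1) → ℕ, (if m ≤ ∑ i, k i then Box k else ∅)) := by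
          rw [hnull, zero_add]
      _ ≤ ∑' k : Fin (n' + 1) → ℕ, volume (if m ≤ ∑ i, k i then Box k else ∅) :=
          measure_iUnion_le _
      _ = ∑' k : Fin (n' + 1) → ℕ, (ENNReal.ofReal P * 2⁻¹ ^ (n' + 1))
            * (if m ≤ ∑ i, k i then (2 : ℝ≥0∞)⁻¹ ^ (∑ i, k i) else 0) := by
          apply tsum_congr
          intro k
          split_ifs with h
          · rw [hBoxVol k, mul_assoc]
          · simp
      _ = (ENNReal.ofReal P * 2⁻¹ ^ (n' + 1))
            * ∑' k : Fin (n' + 1) → ℕ, (if m ≤ ∑ i, k i then (2 : ℝ≥0∞)⁻¹ ^ (∑ i, k i) else 0) :=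
          ENNReal.tsum_mul_left
      _ ≤ (ENNReal.ofReal P * 2⁻¹ ^ (n' + 1))
            * (4 ^ (n' + 1) * ((m : ℝ≥0∞) + 1) ^ n' * 2⁻¹ ^ m) := by
          gcongr
          exact sumT n' m
      _ = (ENNReal.ofReal P * 2⁻¹ ^ (m + (n' + 1)))
            * (4 ^ (n' + 1) * ((m : ℝ≥0∞) + 1) ^ n') := by
          rw [pow_add]
          ring
      _ ≤ ENNReal.ofReal B * (4 ^ (n' + 1) * ((m : ℝ≥0∞) + 1) ^ n') := by
          gcongr
          calc ENNReal.ofReal P * 2⁻¹ ^ (m + (n' + 1))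
              ≤ ENNReal.ofReal (2 ^ (m + (n' + 1)) * B) * 2⁻¹ ^ (m + (n' + 1)) := by
                have hkey := ENNReal.ofReal_le_ofReal key1
                gcongr
            _ = ENNReal.ofReal B * (2 ^ (m + (n' + 1)) * 2⁻¹ ^ (m + (n' + 1))) := by
                rw [ENNReal.ofReal_mul (by positivity), ENNReal.ofReal_pow (by norm_num),
                  ENNReal.ofReal_ofNat]
                ring
            _ = ENNReal.ofReal B := by
                rw [← mul_pow, ENNReal.mul_inv_cancel (by norm_num) (by norm_num), one_pow,
                  mul_one]
      _ ≤ ENNReal.ofReal B * (ENNReal.ofReal (4 ^ (n' + 1))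
            * ENNReal.ofReal ((3 / Real.log 2 * ℓ) ^ n')) := by
          gcongr
          · rw [ENNReal.ofReal_pow (by norm_num), ENNReal.ofReal_ofNat]
          · rw [ENNReal.ofReal_pow (by positivity)]
            gcongr
            have : ((m : ℝ≥0∞) + 1) = ENNReal.ofReal ((m : ℝ) + 1) := by
              rw [ENNReal.ofReal_add (by positivity) (by norm_num), ENNReal.ofReal_natCast,
                ENNReal.ofReal_one]
            rw [this]
            exact ENNReal.ofReal_le_ofReal key2
      _ = ENNReal.ofReal ((4 ^ (n' + 1) * (3 / Real.log 2) ^ n') * B * ℓ ^ n') := by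
          rw [← ENNReal.ofReal_mul (by positivity), ← ENNReal.ofReal_mul (by positivity)]
          congr 1
          rw [mul_pow]
          ring
  exact ENNReal.toReal_le_of_le_ofReal (by positivity) main
end

section
/- Let $\theta > 0$ and $n \geq 1$. For any small $\epsilon > 0$ and all $H \geq 1$ and $b \in (0,1)$, the integral $\int \frac{dx}{(1 + \max_i |x_i|)^{1+\theta}}$, taken over the set of $x = (x_1, \ldots, x_n) \in \mathbb{R}^n$ with $|x_1 \cdots x_n| \leq H^b$ and $\max_i |x_i| \geq H$, is $O_{n,\theta,\epsilon}(H^{-1-\theta+\epsilon+b})$. -/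
open MeasureTheory Real

section aux

/-- 1-d integrability of `|t|^{-s} (1+|t|)^{-q}` when `s < 1` and `1 < s + q`. -/
lemma aux_integrable_g {s q : ℝ} (hs1 : s < 1) (hq : 0 < q) (hsq : 1 < s + q) :
    Integrable (fun t : ℝ => |t| ^ (-s) * (1 + |t|) ^ (-q)) := by
  have hmeas : Measurable (fun t : ℝ => |t| ^ (-s) * (1 + |t|) ^ (-q)) := by
    fun_prop
  -- integrability on (0, ∞)
  have hIoi : IntegrableOn (fun t : ℝ => |t| ^ (-s) * (1 + |t|) ^ (-q)) (Set.Ioi 0) := by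
    have h1 : IntegrableOn (fun t : ℝ => |t| ^ (-s) * (1 + |t|) ^ (-q)) (Set.Ioc 0 1) := by
      have hbase : IntegrableOn (fun t : ℝ => t ^ (-s)) (Set.Ioc (0:ℝ) 1) := by
        have := intervalIntegral.intervalIntegrable_rpow' (a := 0) (b := 1)
          (r := -s) (by linarith)
        rwa [intervalIntegrable_iff, Set.uIoc_of_le zero_le_one] at this
      refine hbase.mono' hmeas.aestronglyMeasurable.restrict
        ((ae_restrict_mem measurableSet_Ioc).mono (fun x hx => ?_))
      have hx0 : (0:ℝ) < x := hx.1
      have h1x : (0:ℝ) < 1 + |x| := by positivity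
      rw [Real.norm_eq_abs, abs_mul, abs_of_nonneg (Real.rpow_nonneg (abs_nonneg x) _),
        abs_of_nonneg (Real.rpow_nonneg h1x.le _), abs_of_pos hx0]
      calc x ^ (-s) * (1 + x) ^ (-q)
          ≤ x ^ (-s) * 1 := mul_le_mul_of_nonneg_left
            (Real.rpow_le_one_of_one_le_of_nonpos (by linarith) (by linarith))
            (Real.rpow_nonneg hx0.le _)
        _ = x ^ (-s) := mul_one _
    have h2 : IntegrableOn (fun t : ℝ => |t| ^ (-s) * (1 + |t|) ^ (-q)) (Set.Ioi 1) := by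
      have hbase : IntegrableOn (fun t : ℝ => t ^ (-(s + q))) (Set.Ioi (1:ℝ)) := by
        rw [integrableOn_Ioi_rpow_iff one_pos]; linarith
      refine hbase.mono' hmeas.aestronglyMeasurable.restrict
        ((ae_restrict_mem measurableSet_Ioi).mono ?_)
      intro x hx
      have hx1 : (1:ℝ) < x := hx
      have hx0 : (0:ℝ) < x := by linarith
      have h1x : (0:ℝ) < 1 + |x| := by positivity
      rw [Real.norm_eq_abs, abs_mul, abs_of_nonneg (Real.rpow_nonneg (abs_nonneg x) _),
        abs_of_nonneg (Real.rpow_nonneg h1x.le _), abs_of_pos hx0]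
      calc x ^ (-s) * (1 + x) ^ (-q)
          ≤ x ^ (-s) * x ^ (-q) := mul_le_mul_of_nonneg_left
            (Real.rpow_le_rpow_of_nonpos hx0 (by linarith) (by linarith))
            (Real.rpow_nonneg hx0.le _)
        _ = x ^ (-(s + q)) := by rw [← Real.rpow_add hx0]; ring_nf
    have := h1.union h2
    refine this.mono_set ?_
    intro x hx
    rcases le_or_gt x 1 with h | h
    · exact Or.inl ⟨hx, h⟩
    · exact Or.inr h
  -- integrability on (-∞, 0]
  have hIic : IntegrableOn (fun t : ℝ => |t| ^ (-s) * (1 + |t|) ^ (-q)) (Set.Iic 0) := by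
    rw [← Measure.map_neg_eq_self (volume : Measure ℝ)]
    have m : MeasurableEmbedding fun x : ℝ => -x := (Homeomorph.neg ℝ).measurableEmbedding
    rw [m.integrableOn_map_iff]
    simp_rw [Function.comp_def, abs_neg, Set.neg_preimage, Set.neg_Iic, neg_zero]
    exact Iff.mpr integrableOn_Ici_iff_integrableOn_Ioi hIoi
  rw [← integrableOn_univ, ← Set.Iic_union_Ioi (a := (0:ℝ))]
  exact hIic.union hIoi

end aux

/-- Integral of the sup-norm kernel over the region of small coordinate product
and large sup-norm: it is `O(H^{-1-θ+ε+b})`. -/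
theorem integral_large_supnorm_small_product (n : ℕ) (hn : 1 ≤ n)
    (θ : ℝ) (hθ : 0 < θ) :
    ∀ ε : ℝ, 0 < ε → ∃ C : ℝ, 0 < C ∧
      ∀ H b : ℝ, 1 ≤ H → b ∈ Set.Ioo (0 : ℝ) 1 →
        (∫ x in {x : Fin n → ℝ | |∏ i, x i| ≤ H ^ b ∧ H ≤ ‖x‖},
            (1 + ‖x‖) ^ (-(1 + θ)) ∂volume)
          ≤ C * H ^ (-1 - θ + ε + b) := by
  intro ε hε
  have hn0 : (0:ℝ) < n := by exact_mod_cast hn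
  set δ : ℝ := min ε 1 / 2 with hδdef
  have hδpos : 0 < δ := by
    have := lt_min hε one_pos; simpa [hδdef] using by positivity
  have hδε : δ ≤ ε := by
    have : min ε 1 ≤ ε := min_le_left _ _
    simp only [hδdef]; linarith
  have hδ1 : δ ≤ 1 / 2 := by
    have : min ε 1 ≤ 1 := min_le_right _ _
    simp only [hδdef]; linarith
  set s : ℝ := 1 - δ / (2 * n) with hsdef
  have hs1 : s < 1 := by
    have : 0 < δ / (2 * n) := by positivity
    simp only [hsdef]; linarith
  have hs0 : 0 < s := by
    have hn1 : (1:ℝ) ≤ n := by exact_mod_cast hn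
    have h1 : δ / (2 * n) ≤ (1/2) / (2 * 1) := by
      apply div_le_div₀ (by norm_num) hδ1 (by norm_num) (by linarith)
    simp only [hsdef]
    norm_num at h1 ⊢
    linarith
  have hsq : 1 < s + δ / n := by
    have h2n : δ / (2 * n) < δ / n := by
      apply div_lt_div_of_pos_left hδpos (by positivity)
      linarith
    simp only [hsdef]; linarith
  set g : ℝ → ℝ := fun t => |t| ^ (-s) * (1 + |t|) ^ (-(δ / n)) with hgdef
  have hg_int : Integrable g := aux_integrable_g hs1 (by positivity) hsq
  have hg_nonneg : ∀ t, 0 ≤ g t := fun t => by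
    have : (0:ℝ) < 1 + |t| := by positivity
    positivity
  set I : ℝ := ∫ t, g t with hIdef
  have hI0 : 0 ≤ I := integral_nonneg hg_nonneg
  refine ⟨I ^ n + 1, by positivity, ?_⟩
  intro H b hH hb
  obtain ⟨hb0, hb1⟩ := hb
  have hH0 : (0:ℝ) < H := lt_of_lt_of_le one_pos hH
  set S : Set (Fin n → ℝ) := {x | |∏ i, x i| ≤ H ^ b ∧ H ≤ ‖x‖} with hSdef
  have hSmeas : MeasurableSet S := by
    have hc : Continuous fun x : Fin n → ℝ => |∏ i, x i| :=
      (continuous_finset_prod _ (fun i _ => continuous_apply i)).abs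
    exact ((isClosed_le hc continuous_const).inter
      (isClosed_le continuous_const continuous_norm)).measurableSet
  set e : ℝ := b * s + (δ - (1 + θ)) with hedef
  set G : (Fin n → ℝ) → ℝ := fun x => H ^ e * ∏ i, g (x i) with hGdef
  have hprod_int : Integrable (fun x : Fin n → ℝ => ∏ i, g (x i)) :=
    Integrable.fintype_prod (f := fun _ : Fin n => g) (fun _ => hg_int)
  have hG_int : Integrable G := hprod_int.const_mul _
  have hG_nonneg : ∀ x, 0 ≤ G x := by
    intro x
    have h1 : (0:ℝ) ≤ H ^ e := Real.rpow_nonneg hH0.le _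
    have h2 : (0:ℝ) ≤ ∏ i, g (x i) := Finset.prod_nonneg fun i _ => hg_nonneg _
    exact mul_nonneg h1 h2
  -- the coordinate hyperplanes form a null set
  have hnull : ∀ᵐ x : Fin n → ℝ ∂volume, ∀ i, x i ≠ 0 := by
    rw [MeasureTheory.ae_all_iff]
    intro i
    rw [volume_pi]
    exact Measure.ae_eval_ne _ i 0
  -- the key pointwise bound
  have hkey : ∀ x : Fin n → ℝ, x ∈ S → (∀ i, x i ≠ 0) →
      (1 + ‖x‖) ^ (-(1 + θ)) ≤ G x := by
    intro x hxS hx0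
    obtain ⟨hprod, hnorm⟩ := hxS
    have hm0 : (0:ℝ) < ‖x‖ := lt_of_lt_of_le hH0 hnorm
    have h1m : (0:ℝ) < 1 + ‖x‖ := by linarith
    have hHm : H ≤ 1 + ‖x‖ := by linarith
    have hcoord : ∀ i, |x i| ≤ ‖x‖ := by
      intro i
      simpa [Real.norm_eq_abs] using norm_le_pi_norm x i
    -- split the power
    have hsplit : (1 + ‖x‖) ^ (-(1 + θ))
        = (1 + ‖x‖) ^ (δ - (1 + θ)) * (1 + ‖x‖) ^ (-δ) := by
      rw [← Real.rpow_add h1m]; ring_nf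
    -- first factor
    have hfac1 : (1 + ‖x‖) ^ (δ - (1 + θ)) ≤ H ^ (δ - (1 + θ)) :=
      Real.rpow_le_rpow_of_nonpos hH0 hHm (by linarith)
    -- second factor
    have hfac2 : (1 + ‖x‖) ^ (-δ) ≤ ∏ i, (1 + |x i|) ^ (-(δ / n)) := by
      have heq : (1 + ‖x‖) ^ (-δ) = ∏ _i : Fin n, (1 + ‖x‖) ^ (-(δ / n)) := by
        rw [Finset.prod_const, Finset.card_univ, Fintype.card_fin,
          ← Real.rpow_natCast ((1 + ‖x‖) ^ (-(δ / n))) n, ← Real.rpow_mul h1m.le]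
        congr 1
        field_simp
      rw [heq]
      refine Finset.prod_le_prod (fun i _ => Real.rpow_nonneg h1m.le _) (fun i _ => ?_)
      have : (0:ℝ) < 1 + |x i| := by positivity
      exact Real.rpow_le_rpow_of_nonpos this (by linarith [hcoord i])
        (neg_nonpos.mpr (by positivity))
    -- product lower bound : 1 ≤ H^(b*s) * ∏ |x i|^(-s)
    have hP0 : (0:ℝ) < ∏ i, |x i| := Finset.prod_pos fun i _ => abs_pos.mpr (hx0 i)
    have hPle : (∏ i, |x i|) ≤ H ^ b := by
      rwa [← Finset.abs_prod]
    have hD : (1:ℝ) ≤ H ^ (b * s) * ∏ i, |x i| ^ (-s) := by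
      have hprodpow : (∏ i, |x i| ^ (-s)) = (∏ i, |x i|) ^ (-s) :=
        Real.finset_prod_rpow _ _ (fun i _ => abs_nonneg _) _
      rw [hprodpow, Real.rpow_neg hP0.le, ← div_eq_mul_inv, le_div_iff₀
        (Real.rpow_pos_of_pos hP0 _), one_mul]
      calc (∏ i, |x i|) ^ s ≤ (H ^ b) ^ s := Real.rpow_le_rpow hP0.le hPle hs0.le
        _ = H ^ (b * s) := by rw [← Real.rpow_mul hH0.le]
    -- combine
    have hmain : (1 + ‖x‖) ^ (-(1 + θ))
        ≤ H ^ (δ - (1 + θ)) * ∏ i, (1 + |x i|) ^ (-(δ / n)) := by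
      rw [hsplit]
      exact mul_le_mul hfac1 hfac2 (Real.rpow_nonneg h1m.le _) (Real.rpow_nonneg hH0.le _)
    have hGx : G x = (H ^ (b * s) * ∏ i, |x i| ^ (-s))
        * (H ^ (δ - (1 + θ)) * ∏ i, (1 + |x i|) ^ (-(δ / n))) := by
      simp only [hGdef, hgdef, hedef]
      rw [Real.rpow_add hH0, Finset.prod_mul_distrib]
      ring
    calc (1 + ‖x‖) ^ (-(1 + θ))
        ≤ H ^ (δ - (1 + θ)) * ∏ i, (1 + |x i|) ^ (-(δ / n)) := hmain
      _ ≤ (H ^ (b * s) * ∏ i, |x i| ^ (-s))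
          * (H ^ (δ - (1 + θ)) * ∏ i, (1 + |x i|) ^ (-(δ / n))) := by
          refine le_mul_of_one_le_left ?_ hD
          exact mul_nonneg (Real.rpow_nonneg hH0.le _)
            (Finset.prod_nonneg fun i _ => Real.rpow_nonneg (by positivity) _)
      _ = G x := hGx.symm
  have hae : ∀ᵐ x ∂(volume.restrict S),
      ‖(1 + ‖x‖) ^ (-(1 + θ))‖ ≤ G x := by
    filter_upwards [ae_restrict_of_ae hnull, ae_restrict_mem hSmeas] with x hx0 hxS
    rw [Real.norm_eq_abs, abs_of_nonneg (Real.rpow_nonneg (by positivity) _)]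
    exact hkey x hxS hx0
  have hf_meas : AEStronglyMeasurable (fun x : Fin n → ℝ => (1 + ‖x‖) ^ (-(1 + θ)))
      (volume.restrict S) := by
    refine Continuous.aestronglyMeasurable ?_
    refine Continuous.rpow_const (continuous_const.add continuous_norm) (fun x => Or.inl ?_)
    positivity
  have hf_int : IntegrableOn (fun x : Fin n → ℝ => (1 + ‖x‖) ^ (-(1 + θ))) S :=
    hG_int.integrableOn.mono' hf_meas hae
  have hexp : e ≤ -1 - θ + ε + b := by
    have hbs : b * s ≤ b := by nlinarith
    simp only [hedef]; linarith
  calc (∫ x in S, (1 + ‖x‖) ^ (-(1 + θ)) ∂volume)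
      ≤ ∫ x in S, G x ∂volume := by
        refine integral_mono_ae hf_int hG_int.integrableOn (hae.mono fun x hx => ?_)
        exact le_trans (le_abs_self _) (by rwa [Real.norm_eq_abs] at hx)
    _ ≤ ∫ x, G x ∂volume :=
        setIntegral_le_integral hG_int (Filter.Eventually.of_forall hG_nonneg)
    _ = H ^ e * I ^ n := by
        simp only [hGdef]
        rw [integral_const_mul, MeasureTheory.integral_fintype_prod_volume_eq_pow g,
          Fintype.card_fin, hIdef]
    _ ≤ (I ^ n + 1) * H ^ (-1 - θ + ε + b) := by
        have h1 : H ^ e ≤ H ^ (-1 - θ + ε + b) :=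
          Real.rpow_le_rpow_of_exponent_le hH hexp
        have h2 : (0:ℝ) < H ^ (-1 - θ + ε + b) := Real.rpow_pos_of_pos hH0 _
        nlinarith [Real.rpow_nonneg hH0.le e, pow_nonneg hI0 n]
end

section
/- Let $\theta > 0$ and $n \geq 1$. For all $H \geq 1$ and $b \in (0,1)$, the integral $\int \frac{dx}{(1 + \max_i |x_i|)^{1+\theta}}$, taken over the set of $x = (x_1, \ldots, x_n) \in \mathbb{R}^n$ with $|x_1 \cdots x_n| \leq H^b$, is $O_{n,\theta}(H^b)$. -/
open MeasureTheory Real Set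

/-- 1-D integrability of `|t|^(-δ) (1+|t|)^(-p)` when `0 < δ < 1 < δ + p`. -/
lemma integrable_abs_rpow_mul_aux (δ p : ℝ) (hδ0 : 0 < δ) (hδ1 : δ < 1) (hp : 0 < p)
    (hsum : 1 < δ + p) :
    Integrable (fun t : ℝ => |t| ^ (-δ) * (1 + |t|) ^ (-p)) := by
  have key : IntegrableOn (fun t : ℝ => t ^ (-δ) * (1 + t) ^ (-p)) (Ioi (0 : ℝ)) := by
    have h1 : IntegrableOn (fun t : ℝ => t ^ (-δ) * (1 + t) ^ (-p)) (Ioc (0 : ℝ) 1) := by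
      have maj : IntegrableOn (fun t : ℝ => t ^ (-δ)) (Ioc (0 : ℝ) 1) := by
        have := intervalIntegral.intervalIntegrable_rpow' (a := 0) (b := 1) (r := -δ)
          (by linarith)
        rwa [intervalIntegrable_iff_integrableOn_Ioc_of_le zero_le_one] at this
      refine maj.mono' (Measurable.aestronglyMeasurable (by fun_prop)) ?_
      filter_upwards [ae_restrict_mem measurableSet_Ioc] with t ht
      have ht0 : 0 < t := ht.1
      rw [Real.norm_eq_abs, abs_of_nonneg (by positivity)]
      have hle1 : (1 + t) ^ (-p) ≤ 1 :=
        Real.rpow_le_one_of_one_le_of_nonpos (by linarith) (by linarith)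
      have := mul_le_of_le_one_right (Real.rpow_nonneg ht0.le (-δ)) hle1
      simpa using this
    have h2 : IntegrableOn (fun t : ℝ => t ^ (-δ) * (1 + t) ^ (-p)) (Ioi (1 : ℝ)) := by
      have maj : IntegrableOn (fun t : ℝ => t ^ (-(δ + p))) (Ioi (1 : ℝ)) :=
        integrableOn_Ioi_rpow_of_lt (by linarith) zero_lt_one
      refine maj.mono' (Measurable.aestronglyMeasurable (by fun_prop)) ?_
      filter_upwards [ae_restrict_mem measurableSet_Ioi] with t ht
      have ht0 : (0 : ℝ) < t := lt_trans zero_lt_one ht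
      rw [Real.norm_eq_abs, abs_of_nonneg (by positivity)]
      have hle1 : (1 + t) ^ (-p) ≤ t ^ (-p) :=
        Real.rpow_le_rpow_of_nonpos ht0 (by linarith) (by linarith)
      calc t ^ (-δ) * (1 + t) ^ (-p) ≤ t ^ (-δ) * t ^ (-p) :=
            mul_le_mul_of_nonneg_left hle1 (Real.rpow_nonneg ht0.le _)
        _ = t ^ (-(δ + p)) := by rw [← Real.rpow_add ht0]; ring_nf
    have hun : Ioc (0 : ℝ) 1 ∪ Ioi (1 : ℝ) = Ioi (0 : ℝ) :=
      Ioc_union_Ioi_eq_Ioi zero_le_one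
    rw [← hun]
    exact h1.union h2
  have habs : IntegrableOn (fun t : ℝ => |t| ^ (-δ) * (1 + |t|) ^ (-p)) (Ioi (0 : ℝ)) := by
    refine key.congr_fun (fun t ht => ?_) measurableSet_Ioi
    rw [abs_of_pos ht]
  have int_Iic : IntegrableOn (fun t : ℝ => |t| ^ (-δ) * (1 + |t|) ^ (-p)) (Iic (0 : ℝ)) := by
    rw [← Measure.map_neg_eq_self (volume : Measure ℝ)]
    have m : MeasurableEmbedding fun x : ℝ => -x := (Homeomorph.neg ℝ).measurableEmbedding
    rw [m.integrableOn_map_iff]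
    simp_rw [Function.comp_def, abs_neg, neg_preimage, neg_Iic, neg_zero]
    exact (integrableOn_Ici_iff_integrableOn_Ioi (by finiteness)).mpr habs
  rw [← integrableOn_univ, ← Iic_union_Ioi (a := (0 : ℝ))]
  exact int_Iic.union habs

/-- Integral of the sup-norm kernel over the region of small coordinate product:
it is `O_{n,θ}(H^b)`. -/
theorem integral_small_product (n : ℕ) (hn : 1 ≤ n) (θ : ℝ) (hθ : 0 < θ) :
    ∃ C : ℝ, 0 < C ∧
      ∀ H b : ℝ, 1 ≤ H → b ∈ Set.Ioo (0 : ℝ) 1 →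
        (∫ x in {x : Fin n → ℝ | |∏ i, x i| ≤ H ^ b},
            (1 + ‖x‖) ^ (-(1 + θ)) ∂volume)
          ≤ C * H ^ b := by
  have hn1 : (1 : ℝ) ≤ (n : ℝ) := by exact_mod_cast hn
  have hn0 : (0 : ℝ) < (n : ℝ) := by linarith
  set p : ℝ := (1 + θ) / n with hp_def
  set δ : ℝ := 1 - 1 / (2 * n) with hδ_def
  have hhalf : 1 / (2 * (n : ℝ)) ≤ 1 / 2 := by
    apply one_div_le_one_div_of_le two_pos; linarith
  have hhalfpos : 0 < 1 / (2 * (n : ℝ)) := by positivity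
  have hδ0 : 0 < δ := by rw [hδ_def]; linarith
  have hδ1 : δ < 1 := by rw [hδ_def]; linarith
  have hp0 : 0 < p := by rw [hp_def]; positivity
  have hsum : 1 < δ + p := by
    have h : 1 / (2 * (n : ℝ)) < (1 + θ) / n := by
      rw [div_lt_div_iff₀ (by positivity) hn0]
      nlinarith
    rw [hδ_def, hp_def]; linarith
  have hh := integrable_abs_rpow_mul_aux δ p hδ0 hδ1 hp0 hsum
  set I : ℝ := ∫ t : ℝ, |t| ^ (-δ) * (1 + |t|) ^ (-p) with hI_def
  have hI0 : 0 ≤ I := integral_nonneg fun t => by positivity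
  refine ⟨I ^ n + 1, by positivity, ?_⟩
  intro H b hH hb
  set S : ℝ := H ^ b with hS_def
  have hS1 : 1 ≤ S := Real.one_le_rpow hH hb.1.le
  have hS0 : 0 < S := lt_of_lt_of_le one_pos hS1
  set A : Set (Fin n → ℝ) := {x : Fin n → ℝ | |∏ i, x i| ≤ S} with hA_def
  have hA_meas : MeasurableSet A :=
    measurableSet_le ((Finset.univ.measurable_prod fun i _ =>
      measurable_pi_apply i).abs) measurable_const
  set g : (Fin n → ℝ) → ℝ := fun x => S ^ δ * ∏ i, (|x i| ^ (-δ) * (1 + |x i|) ^ (-p))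
    with hg_def
  have hg_int : Integrable g :=
    (Integrable.fintype_prod (f := fun _ : Fin n => fun t : ℝ =>
      |t| ^ (-δ) * (1 + |t|) ^ (-p)) fun _ => hh).const_mul _
  have hg0 : ∀ x, 0 ≤ g x := fun x => by
    apply mul_nonneg (Real.rpow_nonneg hS0.le _)
    exact Finset.prod_nonneg fun i _ => by positivity
  have hf_cont : Continuous fun x : Fin n → ℝ => (1 + ‖x‖) ^ (-(1 + θ)) :=
    (continuous_const.add continuous_norm).rpow_const fun x =>
      Or.inl (ne_of_gt (by show (0:ℝ) < 1 + ‖x‖; positivity))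
  have hprod_ne : ∀ᵐ x : Fin n → ℝ ∂volume, ∏ i, x i ≠ 0 := by
    have hall : ∀ᵐ x : Fin n → ℝ ∂volume, ∀ i, x i ≠ 0 := by
      rw [ae_all_iff]
      intro i
      rw [volume_pi]
      exact Measure.ae_eval_ne _ i 0
    filter_upwards [hall] with x hx
    exact Finset.prod_ne_zero_iff.mpr fun i _ => hx i
  have key : ∀ x : Fin n → ℝ, ∏ i, x i ≠ 0 → x ∈ A →
      (1 + ‖x‖) ^ (-(1 + θ)) ≤ g x := by
    intro x hx hxA
    have hP : 0 < |∏ i, x i| := abs_pos.mpr hx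
    have h1 : (1 : ℝ) ≤ S ^ δ * ∏ i, |x i| ^ (-δ) := by
      have e1 : ∏ i, |x i| ^ (-δ) = |∏ i, x i| ^ (-δ) := by
        rw [Real.finset_prod_rpow _ _ (fun i _ => abs_nonneg _), ← Finset.abs_prod]
      have hdiv : (1 : ℝ) ≤ (S / |∏ i, x i|) ^ δ :=
        Real.one_le_rpow ((one_le_div hP).mpr hxA) hδ0.le
      rw [Real.div_rpow hS0.le (abs_nonneg _)] at hdiv
      rw [e1, Real.rpow_neg (abs_nonneg _), ← div_eq_mul_inv]
      exact hdiv
    have h2 : (1 + ‖x‖) ^ (-(1 + θ)) ≤ ∏ i, (1 + |x i|) ^ (-p) := by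
      have hb0 : (0 : ℝ) < 1 + ‖x‖ := by positivity
      have e2 : ∏ i, (1 + |x i|) ^ (-p) = (∏ i, (1 + |x i|)) ^ (-p) :=
        Real.finset_prod_rpow _ _ (fun i _ => by positivity) _
      have hle : ∏ i, (1 + |x i|) ≤ (1 + ‖x‖) ^ n := by
        have h := Finset.prod_le_prod (s := (Finset.univ : Finset (Fin n)))
          (f := fun i => 1 + |x i|) (g := fun _ => 1 + ‖x‖)
          (fun i _ => by positivity)
          (fun i _ => by
            have := norm_le_pi_norm x i
            rw [Real.norm_eq_abs] at this
            linarith)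
        simpa [Finset.prod_const] using h
      have hppos : 0 < ∏ i, (1 + |x i|) := Finset.prod_pos fun i _ => by positivity
      rw [e2]
      calc (1 + ‖x‖) ^ (-(1 + θ)) = ((1 + ‖x‖) ^ (n : ℕ)) ^ (-p) := by
            rw [← Real.rpow_natCast (1 + ‖x‖) n, ← Real.rpow_mul hb0.le]
            congr 1
            rw [hp_def]
            field_simp
        _ ≤ (∏ i, (1 + |x i|)) ^ (-p) :=
            Real.rpow_le_rpow_of_nonpos hppos hle (by linarith)
    have hgx : g x = (S ^ δ * ∏ i, |x i| ^ (-δ)) * ∏ i, (1 + |x i|) ^ (-p) := by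
      rw [hg_def]
      simp only [Finset.prod_mul_distrib]
      ring
    rw [hgx]
    exact h2.trans (le_mul_of_one_le_left
      (Finset.prod_nonneg fun i _ => Real.rpow_nonneg (by positivity) _) h1)
  have hae : ∀ᵐ x ∂(volume.restrict A), (1 + ‖x‖) ^ (-(1 + θ)) ≤ g x := by
    filter_upwards [ae_restrict_mem hA_meas, ae_restrict_of_ae hprod_ne] with x hxA hx
    exact key x hx hxA
  have hf_int : IntegrableOn (fun x : Fin n → ℝ => (1 + ‖x‖) ^ (-(1 + θ))) A := by
    refine (hg_int.restrict (s := A)).mono' (hf_cont.aestronglyMeasurable.restrict) ?_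
    filter_upwards [hae] with x hx
    rwa [Real.norm_eq_abs, abs_of_nonneg (Real.rpow_nonneg (by positivity) _)]
  calc (∫ x in A, (1 + ‖x‖) ^ (-(1 + θ)) ∂volume)
      ≤ ∫ x in A, g x ∂volume := integral_mono_ae hf_int (hg_int.restrict) hae
    _ ≤ ∫ x, g x ∂volume := setIntegral_le_integral hg_int (Filter.Eventually.of_forall hg0)
    _ = S ^ δ * I ^ n := by
        rw [hg_def, integral_const_mul]
        congr 1
        rw [hI_def, integral_fintype_prod_volume_eq_pow (ι := Fin n)
          (fun t : ℝ => |t| ^ (-δ) * (1 + |t|) ^ (-p)), Fintype.card_fin]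
    _ ≤ (I ^ n + 1) * S := by
        have h1 : S ^ δ ≤ S := by
          calc S ^ δ ≤ S ^ (1 : ℝ) :=
                Real.rpow_le_rpow_of_exponent_le hS1 (by linarith)
            _ = S := Real.rpow_one S
        have h2 : 0 ≤ I ^ n := pow_nonneg hI0 n
        have h3 : 0 ≤ S ^ δ := Real.rpow_nonneg hS0.le _
        nlinarith
end

section
/- Let $K$ be a number field of degree $n$ with fixed nonzero integral ideal $\mathfrak{n}$ and $\mathbb{Z}$-basis $\omega_1,\ldots,\omega_n$ of $\mathfrak{n}$, $R$ the associated fundamental domain in $V = K\otimes_\mathbb{Q}\mathbb{R}$, and for $\gamma \in R \cap K$ let $\mathfrak{a}_\gamma = \{\beta \in \mathcal{O}_K : \beta\gamma \in \mathfrak{n}\}$ be the denominator ideal. Then for any $T \geq 1$ and $H \geq 2$, the number of tuples $\gamma = (\gamma_1,\ldots,\gamma_T) \in (R \cap K)^T$ with $N(\bigcap_{i} \mathfrak{a}_{\gamma_i}) \leq H$ is $O_{K,\mathfrak{n},T}(H^{T+1})$. -/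
open NumberField

/-- The denominator ideal `𝔞_γ = {β ∈ 𝓞_K : βγ ∈ 𝔫}` of `γ ∈ K` relative to the
integral ideal `𝔫`. -/
def denomIdeal {K : Type*} [Field K] [NumberField K] (𝔫 : Ideal (𝓞 K)) (γ : K) :
    Ideal (𝓞 K) :=
  Submodule.comap (LinearMap.toSpanSingleton (𝓞 K) K γ)
    (Submodule.map (Algebra.linearMap (𝓞 K) K) 𝔫)

set_option maxHeartbeats 2000000
set_option synthInstance.maxHeartbeats 1000000

namespace CountAux

open NumberField.InfinitePlace NumberField.mixedEmbedding NumberField.mixedEmbedding.fundamentalCone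
open NumberField.Units NumberField.Units.dirichletUnitTheorem
open Module Ideal Module.Free
open scoped nonZeroDivisors

variable (K : Type*) [Field K] [NumberField K]

lemma cone_bound : ∃ C : ℝ, 1 ≤ C ∧ ∀ x ∈ fundamentalCone K, ∀ w : InfinitePlace K,
    normAtPlace w x ≤ C * (mixedEmbedding.norm x) ^ ((Module.finrank ℚ K : ℝ)⁻¹) := by
  classical
  have hn0 : 0 < Module.finrank ℚ K := Module.finrank_pos
  obtain ⟨R, hR⟩ := (ZSpan.fundamentalDomain_isBounded
    ((basisUnitLattice K).ofZLatticeBasis ℝ _)).subset_closedBall 0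
  set n : ℕ := Module.finrank ℚ K with hn
  set B : ℝ := max R 0 with hB
  have hB0 : 0 ≤ B := le_max_right _ _
  refine ⟨Real.exp ((n : ℝ) * B), Real.one_le_exp (by positivity), fun x hx w => ?_⟩
  have hN : 0 < mixedEmbedding.norm x := norm_pos_of_mem hx
  have hnap : ∀ w, 0 < normAtPlace w x := normAtPlace_pos_of_mem hx
  have hlog : ∀ w : {w : InfinitePlace K // w ≠ w₀},
      |Real.log (normAtPlace w.1 x) - Real.log (mixedEmbedding.norm x) * (n : ℝ)⁻¹| ≤ B := by
    intro w
    have h1 : ‖logMap x‖ ≤ R := mem_closedBall_zero_iff.mp (hR hx.1)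
    have h2 : |logMap x w| ≤ R := by
      calc |logMap x w| = ‖logMap x w‖ := (Real.norm_eq_abs _).symm
        _ ≤ ‖logMap x‖ := norm_le_pi_norm _ w
        _ ≤ R := h1
    have h3 : (1 : ℝ) ≤ mult w.1 := one_le_mult
    rw [logMap_apply, abs_mul, abs_of_pos (lt_of_lt_of_le zero_lt_one h3)] at h2
    calc |Real.log (normAtPlace w.1 x) - Real.log (mixedEmbedding.norm x) * (n : ℝ)⁻¹|
        ≤ (mult w.1 : ℝ) * |Real.log (normAtPlace w.1 x)
            - Real.log (mixedEmbedding.norm x) * (n : ℝ)⁻¹| :=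
          le_mul_of_one_le_left (abs_nonneg _) h3
      _ ≤ R := h2
      _ ≤ B := le_max_left _ _
  have key0 : Real.log (normAtPlace (w₀ : InfinitePlace K) x) ≤
      Real.log (mixedEmbedding.norm x) * (n : ℝ)⁻¹ + (n : ℝ) * B := by
    have hn1 : (1 : ℝ) ≤ (n : ℝ) := by exact_mod_cast hn0
    have hsum : Real.log (mixedEmbedding.norm x)
        = ∑ w', (mult w' : ℝ) * Real.log (normAtPlace w' x) := by
      rw [mixedEmbedding.norm_apply,
        Real.log_prod (fun w' _ => (pow_ne_zero _ (hnap w').ne'))]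
      simp_rw [Real.log_pow]
    have hsplit : Real.log (mixedEmbedding.norm x)
        = (mult (w₀ : InfinitePlace K) : ℝ) * Real.log (normAtPlace (w₀ : InfinitePlace K) x)
          + ∑ w' ∈ Finset.univ.erase (w₀ : InfinitePlace K),
              (mult w' : ℝ) * Real.log (normAtPlace w' x) := by
      rw [hsum]
      exact (Finset.add_sum_erase _ _ (Finset.mem_univ _)).symm
    have hmultsum : (mult (w₀ : InfinitePlace K) : ℝ)
        + ∑ w' ∈ Finset.univ.erase (w₀ : InfinitePlace K), (mult w' : ℝ) = (n : ℝ) := by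
      have h1 : (mult (w₀ : InfinitePlace K) : ℝ)
          + ∑ w' ∈ Finset.univ.erase (w₀ : InfinitePlace K), (mult w' : ℝ)
          = ∑ w' : InfinitePlace K, (mult w' : ℝ) :=
        Finset.add_sum_erase Finset.univ (fun w' : InfinitePlace K => (mult w' : ℝ))
          (Finset.mem_univ _)
      rw [h1, ← Nat.cast_sum, sum_mult_eq]
    have hlb : ∀ w' ∈ Finset.univ.erase (w₀ : InfinitePlace K),
        (mult w' : ℝ) * (Real.log (mixedEmbedding.norm x) * (n : ℝ)⁻¹ - B)
          ≤ (mult w' : ℝ) * Real.log (normAtPlace w' x) := by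
      intro w' hw'
      have hne := (Finset.mem_erase.mp hw').1
      have habs := (abs_le.mp (hlog ⟨w', hne⟩)).1
      exact mul_le_mul_of_nonneg_left (by linarith) (Nat.cast_nonneg _)
    have hsum_lb : (∑ w' ∈ Finset.univ.erase (w₀ : InfinitePlace K), (mult w' : ℝ))
          * (Real.log (mixedEmbedding.norm x) * (n : ℝ)⁻¹ - B)
        ≤ ∑ w' ∈ Finset.univ.erase (w₀ : InfinitePlace K),
            (mult w' : ℝ) * Real.log (normAtPlace w' x) := by
      rw [Finset.sum_mul]
      exact Finset.sum_le_sum hlb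
    have hm1 : (1 : ℝ) ≤ (mult (w₀ : InfinitePlace K) : ℝ) := one_le_mult
    have hmn : (mult (w₀ : InfinitePlace K) : ℝ) ≤ (n : ℝ) := by
      have h0 : 0 ≤ ∑ w' ∈ Finset.univ.erase (w₀ : InfinitePlace K), (mult w' : ℝ) :=
        Finset.sum_nonneg fun _ _ => Nat.cast_nonneg _
      linarith
    have hLN : (n : ℝ) * (Real.log (mixedEmbedding.norm x) * (n : ℝ)⁻¹)
        = Real.log (mixedEmbedding.norm x) := by
      field_simp
    have hS : ∑ w' ∈ Finset.univ.erase (w₀ : InfinitePlace K), (mult w' : ℝ)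
        = (n : ℝ) - (mult (w₀ : InfinitePlace K) : ℝ) := by linarith
    rw [hS] at hsum_lb
    have h2 : (mult (w₀ : InfinitePlace K) : ℝ) * Real.log (normAtPlace (w₀ : InfinitePlace K) x)
        ≤ (mult (w₀ : InfinitePlace K) : ℝ) * (Real.log (mixedEmbedding.norm x) * (n : ℝ)⁻¹)
          + ((n : ℝ) - (mult (w₀ : InfinitePlace K) : ℝ)) * B := by nlinarith [hsplit, hsum_lb, hLN]
    have h3 : ((n : ℝ) - (mult (w₀ : InfinitePlace K) : ℝ)) * B
        ≤ (mult (w₀ : InfinitePlace K) : ℝ) * ((n : ℝ) * B) := by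
      nlinarith [mul_nonneg (mul_nonneg (by linarith : (0:ℝ) ≤ (n : ℝ))
        (sub_nonneg.mpr hm1)) hB0, mul_nonneg (by linarith : (0:ℝ) ≤ (mult (w₀ : InfinitePlace K) : ℝ)) hB0]
    have hkey : (mult (w₀ : InfinitePlace K) : ℝ) * Real.log (normAtPlace (w₀ : InfinitePlace K) x)
        ≤ (mult (w₀ : InfinitePlace K) : ℝ)
          * (Real.log (mixedEmbedding.norm x) * (n : ℝ)⁻¹ + (n : ℝ) * B) := by nlinarith [h2, h3]
    exact le_of_mul_le_mul_left hkey (by linarith)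
  have key : ∀ w : InfinitePlace K, Real.log (normAtPlace w x) ≤
      Real.log (mixedEmbedding.norm x) * (n : ℝ)⁻¹ + (n : ℝ) * B := by
    intro w
    have hn1 : (1 : ℝ) ≤ (n : ℝ) := by exact_mod_cast hn0
    by_cases hw : w = w₀
    · rw [hw]; exact key0
    · have habs := (abs_le.mp (hlog ⟨w, hw⟩)).2
      nlinarith [mul_nonneg hB0 (sub_nonneg.mpr hn1)]
  calc normAtPlace w x = Real.exp (Real.log (normAtPlace w x)) := (Real.exp_log (hnap w)).symm
    _ ≤ Real.exp (Real.log (mixedEmbedding.norm x) * (n : ℝ)⁻¹ + (n : ℝ) * B) :=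
        Real.exp_le_exp.mpr (key w)
    _ = Real.exp ((n : ℝ) * B) * (mixedEmbedding.norm x) ^ ((n : ℝ)⁻¹) := by
        rw [Real.exp_add, Real.rpow_def_of_pos hN, mul_comm]

open Classical in
lemma repr_bound : ∃ C : ℝ, 0 ≤ C ∧ ∀ (y : mixedSpace K) (i : ChooseBasisIndex ℤ (𝓞 K)),
    |((latticeBasis K).repr y) i| ≤ C * ‖y‖ := by
  classical
  have h : ∀ i : ChooseBasisIndex ℤ (𝓞 K), ∃ Ci : ℝ, 0 ≤ Ci ∧
      ∀ y : mixedSpace K, |((latticeBasis K).repr y) i| ≤ Ci * ‖y‖ := by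
    intro i
    let f : mixedSpace K →ₗ[ℝ] ℝ :=
      (Finsupp.lapply i) ∘ₗ ((latticeBasis K).repr : mixedSpace K →ₗ[ℝ] _)
    let g := LinearMap.toContinuousLinearMap f
    refine ⟨‖g‖, norm_nonneg g, fun y => ?_⟩
    have := g.le_opNorm y
    simpa only [g, f, LinearMap.coe_toContinuousLinearMap', LinearMap.coe_comp,
      Function.comp_apply, LinearEquiv.coe_coe, Finsupp.lapply_apply,
      Real.norm_eq_abs] using this
  choose Ci hCi0 hCi using h
  refine ⟨∑ i, Ci i, Finset.sum_nonneg (fun i _ => hCi0 i), fun y i => (hCi i y).trans ?_⟩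
  exact mul_le_mul_of_nonneg_right
    (Finset.single_le_sum (fun j _ => hCi0 j) (Finset.mem_univ i)) (norm_nonneg y)

open Classical in
lemma principal_count : ∃ C : ℝ, 0 < C ∧ ∀ m : ℕ, 1 ≤ m →
    (Nat.card {I : Ideal (𝓞 K) // I.IsPrincipal ∧ I ≠ ⊥ ∧ Ideal.absNorm I ≤ m} : ℝ)
      ≤ C * m := by
  obtain ⟨C₁, hC₁1, hC₁⟩ := cone_bound K
  obtain ⟨C₂, hC₂0, hC₂⟩ := repr_bound K
  have hC₁0 : 0 ≤ C₁ := le_trans zero_le_one hC₁1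
  set n : ℕ := Module.finrank ℚ K with hn
  have hn0 : 0 < n := Module.finrank_pos
  refine ⟨(2 * C₂ * C₁ + 3) ^ n, by positivity, fun m hm => ?_⟩
  have hm1 : (1 : ℝ) ≤ (m : ℝ) := by exact_mod_cast hm
  -- Step 1 : reduce to counting lattice points in the cone
  have hstep1 : Nat.card {I : Ideal (𝓞 K) // I.IsPrincipal ∧ I ≠ ⊥ ∧ Ideal.absNorm I ≤ m}
      ≤ Nat.card {a : idealSet K 1 // mixedEmbedding.norm (a : mixedSpace K) ≤ (m : ℝ)} := by
    have hmain := card_isPrincipal_dvd_norm_le K 1 ((m : ℕ) : ℝ)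
    have hcongr : Nat.card {I : Ideal (𝓞 K) // I.IsPrincipal ∧ I ≠ ⊥ ∧ Ideal.absNorm I ≤ m}
        = Nat.card {I : (Ideal (𝓞 K))⁰ // ((1 : (Ideal (𝓞 K))⁰) : Ideal (𝓞 K)) ∣ (I : Ideal (𝓞 K))
            ∧ (I : Ideal (𝓞 K)).IsPrincipal ∧ (Ideal.absNorm (I : Ideal (𝓞 K)) : ℝ) ≤ (m : ℝ)} := by
      refine Nat.card_congr ⟨fun I => ⟨⟨I.1, mem_nonZeroDivisors_iff_ne_zero.mpr I.2.2.1⟩,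
          one_dvd _, I.2.1, by exact_mod_cast I.2.2.2⟩,
        fun J => ⟨(J.1 : Ideal (𝓞 K)), J.2.2.1,
          mem_nonZeroDivisors_iff_ne_zero.mp J.1.2, by exact_mod_cast J.2.2.2⟩,
        fun I => rfl, fun J => by ext; rfl⟩
    rw [hcongr]
    calc Nat.card {I : (Ideal (𝓞 K))⁰ // ((1 : (Ideal (𝓞 K))⁰) : Ideal (𝓞 K)) ∣ (I : Ideal (𝓞 K))
            ∧ (I : Ideal (𝓞 K)).IsPrincipal ∧ (Ideal.absNorm (I : Ideal (𝓞 K)) : ℝ) ≤ (m : ℝ)}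
        ≤ Nat.card {I : (Ideal (𝓞 K))⁰ // ((1 : (Ideal (𝓞 K))⁰) : Ideal (𝓞 K)) ∣ (I : Ideal (𝓞 K))
            ∧ (I : Ideal (𝓞 K)).IsPrincipal ∧ (Ideal.absNorm (I : Ideal (𝓞 K)) : ℝ) ≤ (m : ℝ)}
            * (torsionOrder K : ℕ) := Nat.le_mul_of_pos_right _ (torsionOrder_pos K)
      _ = Nat.card {a : idealSet K 1 // mixedEmbedding.norm (a : mixedSpace K) ≤ (m : ℝ)} := hmain
  -- Step 2 : count the lattice points in the cone of norm at most `m`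
  set M : ℕ := ⌈C₂ * (C₁ * (m : ℝ) ^ ((n : ℝ)⁻¹))⌉₊ with hM
  have hcoord : ∀ a : {a : idealSet K 1 // mixedEmbedding.norm (a : mixedSpace K) ≤ (m : ℝ)},
      ∀ i : ChooseBasisIndex ℤ (𝓞 K),
      ∃ z : ℤ, ((latticeBasis K).repr (a.1 : mixedSpace K)) i = (z : ℝ) := by
    intro a i
    obtain ⟨hcone, b, hb1, hb2⟩ := mem_idealSet.mp a.1.2
    have hlat : (a.1 : mixedSpace K) ∈ Submodule.span ℤ (Set.range (latticeBasis K)) :=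
      (mem_span_latticeBasis K).mpr ⟨b, by exact hb2⟩
    obtain ⟨z, hz⟩ := (Basis.mem_span_iff_repr_mem ℤ (latticeBasis K) _).mp hlat i
    exact ⟨z, hz.symm⟩
  choose zf hzf using hcoord
  have hrp1 : (1 : ℝ) ≤ (m : ℝ) ^ ((n : ℝ)⁻¹) := by
    rw [show (1 : ℝ) = (m : ℝ) ^ (0 : ℝ) by rw [Real.rpow_zero]]
    exact Real.rpow_le_rpow_of_exponent_le hm1 (by positivity)
  have habs : ∀ a : {a : idealSet K 1 // mixedEmbedding.norm (a : mixedSpace K) ≤ (m : ℝ)},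
      ∀ i, |(zf a i : ℝ)| ≤ (M : ℝ) := by
    intro a i
    have hcone : (a.1 : mixedSpace K) ∈ fundamentalCone K := a.1.2.1
    have hnorm : ‖(a.1 : mixedSpace K)‖ ≤ C₁ * (m : ℝ) ^ ((n : ℝ)⁻¹) := by
      rw [norm_eq_sup'_normAtPlace]
      refine Finset.sup'_le _ _ (fun w _ => (hC₁ _ hcone w).trans ?_)
      exact mul_le_mul_of_nonneg_left
        (Real.rpow_le_rpow (mixedEmbedding.norm_nonneg _) a.2 (by positivity)) hC₁0
    have h1 : |(zf a i : ℝ)| ≤ C₂ * (C₁ * (m : ℝ) ^ ((n : ℝ)⁻¹)) := by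
      rw [← hzf a i]
      exact (hC₂ _ i).trans (mul_le_mul_of_nonneg_left hnorm hC₂0)
    exact h1.trans (Nat.le_ceil _)
  have hIcc : ∀ a : {a : idealSet K 1 // mixedEmbedding.norm (a : mixedSpace K) ≤ (m : ℝ)},
      ∀ i, zf a i ∈ Finset.Icc (-(M : ℤ)) (M : ℤ) := by
    intro a i
    rw [Finset.mem_Icc]
    obtain ⟨h1, h2⟩ := abs_le.mp (habs a i)
    constructor
    · exact_mod_cast h1
    · exact_mod_cast h2
  have hinj : Function.Injective
      (fun a : {a : idealSet K 1 // mixedEmbedding.norm (a : mixedSpace K) ≤ (m : ℝ)} =>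
        (fun i => (⟨zf a i, hIcc a i⟩ : (Finset.Icc (-(M : ℤ)) (M : ℤ))))) := by
    intro a a' h
    have hz : ∀ i, zf a i = zf a' i := fun i => congrArg Subtype.val (congrFun h i)
    have hrepr : (latticeBasis K).repr (a.1 : mixedSpace K)
        = (latticeBasis K).repr (a'.1 : mixedSpace K) := by
      ext i
      rw [hzf a i, hzf a' i, hz i]
    exact Subtype.ext (Subtype.ext ((latticeBasis K).repr.injective hrepr))
  have hstep2 := Nat.card_le_card_of_injective _ hinj
  have hι : Fintype.card (ChooseBasisIndex ℤ (𝓞 K)) = n := by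
    rw [← Module.finrank_eq_card_chooseBasisIndex]
    exact RingOfIntegers.rank K
  have hcardbox : Nat.card ((ChooseBasisIndex ℤ (𝓞 K)) → (Finset.Icc (-(M : ℤ)) (M : ℤ)))
      = (2 * M + 1) ^ n := by
    rw [Nat.card_fun, Nat.card_eq_fintype_card, Nat.card_eq_fintype_card, Fintype.card_coe,
      Int.card_Icc, hι]
    congr 1
    omega
  -- assemble
  have h2M : ((2 * M + 1 : ℕ) : ℝ) ≤ (2 * C₂ * C₁ + 3) * (m : ℝ) ^ ((n : ℝ)⁻¹) := by
    have hMle : (M : ℝ) ≤ C₂ * (C₁ * (m : ℝ) ^ ((n : ℝ)⁻¹)) + 1 :=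
      le_of_lt (Nat.ceil_lt_add_one (by positivity))
    push_cast
    nlinarith [hrp1, mul_nonneg (mul_nonneg hC₂0 hC₁0) (le_trans zero_le_one hrp1)]
  have hpow : (((m : ℝ) ^ ((n : ℝ)⁻¹)) ^ (n : ℕ)) = (m : ℝ) := by
    rw [← Real.rpow_natCast ((m : ℝ) ^ ((n : ℝ)⁻¹)) n, ← Real.rpow_mul (by positivity),
      inv_mul_cancel₀ (by exact_mod_cast hn0.ne'), Real.rpow_one]
  calc (Nat.card {I : Ideal (𝓞 K) // I.IsPrincipal ∧ I ≠ ⊥ ∧ Ideal.absNorm I ≤ m} : ℝ)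
      ≤ ((2 * M + 1 : ℕ) ^ n : ℕ) := by
        exact_mod_cast le_trans hstep1 (le_of_le_of_eq hstep2 hcardbox)
    _ ≤ ((2 * C₂ * C₁ + 3) * (m : ℝ) ^ ((n : ℝ)⁻¹)) ^ n := by
        push_cast
        exact pow_le_pow_left₀ (by positivity) (by push_cast at h2M ⊢; linarith) n
    _ = (2 * C₂ * C₁ + 3) ^ n * (m : ℝ) := by rw [mul_pow, hpow]

lemma card_quot_map (𝔫 I : Ideal (𝓞 K)) (h𝔫 : 𝔫 ≠ ⊥) :
    Nat.card (Submodule.map (Submodule.mkQ (I * 𝔫)) 𝔫) = Ideal.absNorm I := by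
  have hle : I * 𝔫 ≤ 𝔫 := Ideal.mul_le_right
  have h := Submodule.card_quotient_mul_card_quotient 𝔫 (I * 𝔫) hle
  have h1 : Nat.card ((𝓞 K) ⧸ 𝔫) = Ideal.absNorm 𝔫 := by
    rw [Ideal.absNorm_apply, Submodule.cardQuot_apply]
  have h2 : Nat.card ((𝓞 K) ⧸ (I * 𝔫)) = Ideal.absNorm I * Ideal.absNorm 𝔫 := by
    rw [← _root_.map_mul, Ideal.absNorm_apply, Submodule.cardQuot_apply]
  rw [h1, h2] at h
  have h𝔫0 : 0 < Ideal.absNorm 𝔫 :=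
    Nat.pos_of_ne_zero fun hc => h𝔫 (Ideal.absNorm_eq_zero_iff.mp hc)
  exact Nat.eq_of_mul_eq_mul_right h𝔫0 h

lemma mem_denomIdeal {𝔫 : Ideal (𝓞 K)} {γ : K} {β : 𝓞 K} :
    β ∈ denomIdeal 𝔫 γ ↔ ∃ μ ∈ 𝔫, algebraMap (𝓞 K) K μ = algebraMap (𝓞 K) K β * γ := by
  simp only [denomIdeal, Submodule.mem_comap, LinearMap.toSpanSingleton_apply,
    Submodule.mem_map, Algebra.linearMap_apply, Algebra.smul_def]

lemma denomIdeal_ne_bot {𝔫 : Ideal (𝓞 K)} (h𝔫 : 𝔫 ≠ ⊥) (γ : K) : denomIdeal 𝔫 γ ≠ ⊥ := by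
  obtain ⟨ν₀, hν₀m, hν₀⟩ := Submodule.exists_mem_ne_zero_of_ne_bot h𝔫
  obtain ⟨c, a, ha⟩ := IsLocalization.exists_integer_multiple (nonZeroDivisors (𝓞 K)) γ
  rw [Algebra.smul_def] at ha
  rw [Submodule.ne_bot_iff]
  refine ⟨ν₀ * (c : 𝓞 K), mem_denomIdeal K |>.mpr ⟨ν₀ * a, Ideal.mul_mem_right a _ hν₀m, ?_⟩,
    mul_ne_zero hν₀ (nonZeroDivisors.ne_zero c.2)⟩
  rw [_root_.map_mul, _root_.map_mul, ha]
  ring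

lemma int_coords {n : ℕ} (𝔫 : Ideal (𝓞 K)) (b : Basis (Fin n) ℤ 𝔫) (bK : Basis (Fin n) ℚ K)
    (hcompat : ∀ i, bK i = algebraMap (𝓞 K) K ((b i : 𝓞 K))) {ν : 𝓞 K} (hν : ν ∈ 𝔫) (j : Fin n) :
    ∃ z : ℤ, (bK.repr (algebraMap (𝓞 K) K ν)) j = (z : ℚ) := by
  have hmem : algebraMap (𝓞 K) K ν ∈ Submodule.span ℤ (Set.range bK) := by
    let f : 𝔫 →ₗ[ℤ] K :=
      ((Algebra.linearMap (𝓞 K) K).restrictScalars ℤ).comp ((𝔫.subtype).restrictScalars ℤ)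
    have h1 : (⟨ν, hν⟩ : 𝔫) ∈ (⊤ : Submodule ℤ 𝔫) := trivial
    rw [← b.span_eq] at h1
    have h2 := Submodule.mem_map_of_mem (f := f) h1
    rw [Submodule.map_span] at h2
    have h4 : (f ∘ b) = bK := by
      funext i
      simp only [Function.comp_apply, f, LinearMap.coe_comp, LinearMap.coe_restrictScalars,
        Submodule.coe_subtype, Algebra.linearMap_apply, Function.comp_apply]
      exact (hcompat i).symm
    rwa [← Set.range_comp, h4] at h2
  obtain ⟨z, hz⟩ := (Basis.mem_span_iff_repr_mem ℤ bK _).mp hmem j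
  exact ⟨z, hz.symm⟩

end CountAux

/-- The number of tuples `γ ∈ (R ∩ K)^T` whose common denominator ideal has norm
at most `H` is `O(H^{T+1})`. Here membership in `R` means that all coordinates of
`γᵢ` with respect to the fixed `ℤ`-basis of `𝔫` lie in `[0,1)`. -/
theorem count_bounded_denominator (K : Type*) [Field K] [NumberField K]
    (n : ℕ) (𝔫 : Ideal (𝓞 K)) (h𝔫 : 𝔫 ≠ ⊥) (b : Module.Basis (Fin n) ℤ 𝔫)
    (bK : Module.Basis (Fin n) ℚ K)
    (hcompat : ∀ i, bK i = algebraMap (𝓞 K) K ((b i : 𝓞 K)))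
    (T : ℕ) (hT : 1 ≤ T) :
    ∃ C : ℝ, 0 < C ∧ ∀ H : ℝ, 2 ≤ H →
      (Set.ncard {γ : Fin T → K |
          (∀ i, ∀ j, (bK.repr (γ i) j : ℚ) ∈ Set.Ico (0 : ℚ) 1) ∧
          (Ideal.absNorm (⨅ i, denomIdeal 𝔫 (γ i)) : ℝ) ≤ H} : ℝ)
        ≤ C * H ^ (T + 1) := by
    classical
  obtain ⟨Cp, hCp0, hCp⟩ := CountAux.principal_count K
  choose rep hrep using ClassGroup.mk0_surjective (R := 𝓞 K)
  obtain ⟨B, hB1, hBrep⟩ : ∃ B : ℕ, 1 ≤ B ∧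
      ∀ c : ClassGroup (𝓞 K), Ideal.absNorm ((rep c : Ideal (𝓞 K))) ≤ B :=
    ⟨(Finset.univ.sup fun c : ClassGroup (𝓞 K) => Ideal.absNorm ((rep c : Ideal (𝓞 K)))) + 1,
      Nat.le_add_left 1 _,
      fun c => le_trans (Finset.le_sup
        (f := fun c : ClassGroup (𝓞 K) => Ideal.absNorm ((rep c : Ideal (𝓞 K))))
        (Finset.mem_univ c)) (Nat.le_succ _)⟩
  refine ⟨Cp * (B : ℝ) ^ (T + 1), by positivity, fun H hH => ?_⟩
  have hH0 : (0 : ℝ) ≤ H := by linarith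
  set m : ℕ := ⌊H⌋₊ * B with hmdef
  have hfloor1 : 1 ≤ ⌊H⌋₊ := by
    rw [Nat.le_floor_iff hH0]
    exact_mod_cast (by linarith : (1 : ℝ) ≤ H)
  have hm1 : 1 ≤ m := by
    have := Nat.mul_le_mul hfloor1 hB1
    simpa using this
  have hmR : (m : ℝ) ≤ H * B := by
    rw [hmdef]
    push_cast
    exact mul_le_mul_of_nonneg_right (Nat.floor_le hH0) (Nat.cast_nonneg B)
  set S : Set (Fin T → K) := {γ : Fin T → K |
      (∀ i, ∀ j, (bK.repr (γ i) j : ℚ) ∈ Set.Ico (0 : ℚ) 1) ∧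
      (Ideal.absNorm (⨅ i, denomIdeal 𝔫 (γ i)) : ℝ) ≤ H} with hSdef
  -- the type of "small principal ideals"
  -- generator function
  have key : ∀ γ ∈ S,
      ∃ p : {I : Ideal (𝓞 K) // I.IsPrincipal ∧ I ≠ ⊥ ∧ Ideal.absNorm I ≤ m},
      ∀ i : Fin T, ∃ μ : 𝓞 K, μ ∈ 𝔫 ∧
        algebraMap (𝓞 K) K μ = algebraMap (𝓞 K) K
          (@Submodule.IsPrincipal.generator (𝓞 K) (𝓞 K) _ _ _ p.1 p.2.1) * γ i := by
    intro γ hγ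
    obtain ⟨hbox, hHle⟩ := hγ
    set 𝔞 : Ideal (𝓞 K) := ⨅ i, denomIdeal 𝔫 (γ i) with h𝔞def
    have h𝔞bot : 𝔞 ≠ ⊥ := by
      rw [Submodule.ne_bot_iff]
      have hx : ∀ i : Fin T, ∃ x : 𝓞 K, x ∈ denomIdeal 𝔫 (γ i) ∧ x ≠ 0 := by
        intro i
        obtain ⟨x, h1, h2⟩ :=
          Submodule.exists_mem_ne_zero_of_ne_bot (CountAux.denomIdeal_ne_bot K h𝔫 (γ i))
        exact ⟨x, h1, h2⟩
      choose xf hxf1 hxf2 using hx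
      refine ⟨∏ i, xf i, ?_, Finset.prod_ne_zero_iff.mpr fun i _ => hxf2 i⟩
      rw [h𝔞def, Submodule.mem_iInf]
      intro i
      rw [← Finset.mul_prod_erase Finset.univ xf (Finset.mem_univ i)]
      exact Ideal.mul_mem_right _ _ (hxf1 i)
    have h𝔞m : Ideal.absNorm 𝔞 ≤ ⌊H⌋₊ := Nat.le_floor hHle
    have h𝔞mem : 𝔞 ∈ nonZeroDivisors (Ideal (𝓞 K)) := mem_nonZeroDivisors_iff_ne_zero.mpr h𝔞bot
    set J := rep (ClassGroup.mk0 (⟨𝔞, h𝔞mem⟩ : nonZeroDivisors (Ideal (𝓞 K))))⁻¹ with hJdef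
    set P : Ideal (𝓞 K) := 𝔞 * (J : Ideal (𝓞 K)) with hPdef
    have hPmem : P ∈ nonZeroDivisors (Ideal (𝓞 K)) := mul_mem h𝔞mem J.2
    have hPprin : P.IsPrincipal := by
      have h1 : ClassGroup.mk0 (⟨P, hPmem⟩ : nonZeroDivisors (Ideal (𝓞 K))) = 1 := by
        have h2 : (⟨P, hPmem⟩ : nonZeroDivisors (Ideal (𝓞 K))) = ⟨𝔞, h𝔞mem⟩ * J := rfl
        rw [h2, MonoidHom.map_mul, hJdef, hrep, mul_inv_cancel]
      exact (ClassGroup.mk0_eq_one_iff hPmem).mp h1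
    have hPbot : P ≠ ⊥ := mem_nonZeroDivisors_iff_ne_zero.mp hPmem
    have hPm : Ideal.absNorm P ≤ m := by
      rw [hPdef, _root_.map_mul, hmdef]
      exact Nat.mul_le_mul h𝔞m (hBrep _)
    refine ⟨⟨P, hPprin, hPbot, hPm⟩, fun i => ?_⟩
    have hαP : (@Submodule.IsPrincipal.generator (𝓞 K) (𝓞 K) _ _ _ P hPprin) ∈ P :=
      Submodule.IsPrincipal.generator_mem P
    have hα𝔞 : (@Submodule.IsPrincipal.generator (𝓞 K) (𝓞 K) _ _ _ P hPprin) ∈ 𝔞 :=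
      Ideal.mul_le_left hαP
    have hαd : (@Submodule.IsPrincipal.generator (𝓞 K) (𝓞 K) _ _ _ P hPprin)
        ∈ denomIdeal 𝔫 (γ i) := by
      have h5 : 𝔞 ≤ denomIdeal 𝔫 (γ i) := by
        rw [h𝔞def]
        exact iInf_le _ i
      exact h5 hα𝔞
    exact (CountAux.mem_denomIdeal K).mp hαd
  choose pf μf hμmem hμeq using key
  -- fiber embeddings
  have hfin : ∀ p : {I : Ideal (𝓞 K) // I.IsPrincipal ∧ I ≠ ⊥ ∧ Ideal.absNorm I ≤ m},
      Nonempty ((Submodule.map (Submodule.mkQ (p.1 * 𝔫)) 𝔫) ↪ Fin m) := by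
    intro p
    have hfq : Finite ((𝓞 K) ⧸ (p.1 * 𝔫)) := by
      rw [← Ideal.absNorm_ne_zero_iff, _root_.map_mul]
      exact Nat.mul_ne_zero (fun hc => p.2.2.1 (Ideal.absNorm_eq_zero_iff.mp hc))
        (fun hc => h𝔫 (Ideal.absNorm_eq_zero_iff.mp hc))
    haveI := Fintype.ofFinite ((𝓞 K) ⧸ (p.1 * 𝔫))
    haveI : Fintype (Submodule.map (Submodule.mkQ (p.1 * 𝔫)) 𝔫) := Fintype.ofFinite _
    have hcard : Fintype.card (Submodule.map (Submodule.mkQ (p.1 * 𝔫)) 𝔫) ≤ m := by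
      rw [← Nat.card_eq_fintype_card]
      exact le_trans (le_of_eq (CountAux.card_quot_map K 𝔫 p.1 h𝔫)) p.2.2.2
    have hcard2 : Fintype.card (Submodule.map (Submodule.mkQ (p.1 * 𝔫)) 𝔫)
        ≤ Fintype.card (Fin m) := by rwa [Fintype.card_fin]
    exact Function.Embedding.nonempty_of_card_le hcard2
  have emb := fun p => (hfin p).some
  haveI hIdxfin : Finite {I : Ideal (𝓞 K) // I.IsPrincipal ∧ I ≠ ⊥ ∧ Ideal.absNorm I ≤ m} := by
    have hfin2 : {I : Ideal (𝓞 K) | I.IsPrincipal ∧ I ≠ ⊥ ∧ Ideal.absNorm I ≤ m}.Finite :=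
      (Ideal.finite_setOf_absNorm_le m).subset fun I hI => hI.2.2
    exact Set.Finite.to_subtype hfin2
  -- the injection
  have hinj : Function.Injective (fun γs : S =>
      ((pf γs.1 γs.2, fun i => emb (pf γs.1 γs.2)
          ⟨Submodule.mkQ _ (μf γs.1 γs.2 i), Submodule.mem_map_of_mem (hμmem γs.1 γs.2 i)⟩) :
        {I : Ideal (𝓞 K) // I.IsPrincipal ∧ I ≠ ⊥ ∧ Ideal.absNorm I ≤ m} × (Fin T → Fin m))) := by
    rintro ⟨γ, hγ⟩ ⟨γ', hγ'⟩ h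
    rw [Prod.mk.injEq] at h
    obtain ⟨h1, h2⟩ := h
    haveI : ((pf γ hγ).1).IsPrincipal := (pf γ hγ).2.1
    rw [← h1] at h2
    refine Subtype.ext (funext fun i => ?_)
    have h2i := congrFun h2 i
    have h3 := (emb (pf γ hγ)).injective h2i
    rw [Subtype.mk.injEq, Submodule.mkQ_apply, Submodule.mkQ_apply,
      Submodule.Quotient.eq] at h3
    -- h3 : μf γ hγ i - μf γ' hγ' i ∈ (pf γ hγ).1 * 𝔫
    have hspan : (pf γ hγ).1 = Ideal.span {@Submodule.IsPrincipal.generator (𝓞 K) (𝓞 K) _ _ _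
        (pf γ hγ).1 (pf γ hγ).2.1} := (Ideal.span_singleton_generator _).symm
    rw [hspan] at h3
    obtain ⟨ν, hν𝔫, hνeq⟩ := Ideal.mem_span_singleton_mul.mp h3
    -- transport the generator equality
    have hgen : (@Submodule.IsPrincipal.generator (𝓞 K) (𝓞 K) _ _ _ (pf γ hγ).1 (pf γ hγ).2.1)
        = (@Submodule.IsPrincipal.generator (𝓞 K) (𝓞 K) _ _ _ (pf γ' hγ').1 (pf γ' hγ').2.1) :=
      congrArg (fun p : {I : Ideal (𝓞 K) // I.IsPrincipal ∧ I ≠ ⊥ ∧ Ideal.absNorm I ≤ m} =>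
        @Submodule.IsPrincipal.generator (𝓞 K) (𝓞 K) _ _ _ p.1 p.2.1) h1
    have hα0 : (@Submodule.IsPrincipal.generator (𝓞 K) (𝓞 K) _ _ _ (pf γ hγ).1 (pf γ hγ).2.1)
        ≠ 0 := fun h0 => (pf γ hγ).2.2.1
      ((Submodule.IsPrincipal.eq_bot_iff_generator_eq_zero _).mpr h0)
    have hαK0 : algebraMap (𝓞 K) K
        (@Submodule.IsPrincipal.generator (𝓞 K) (𝓞 K) _ _ _ (pf γ hγ).1 (pf γ hγ).2.1) ≠ 0 :=
      fun h0 => hα0 (IsFractionRing.injective (𝓞 K) K (h0.trans (map_zero _).symm))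
    have e1 := hμeq γ hγ i
    have e2 := hμeq γ' hγ' i
    rw [← hgen] at e2
    have h4 : algebraMap (𝓞 K) K
          (@Submodule.IsPrincipal.generator (𝓞 K) (𝓞 K) _ _ _ (pf γ hγ).1 (pf γ hγ).2.1)
          * (γ' i + algebraMap (𝓞 K) K ν)
        = algebraMap (𝓞 K) K (μf γ hγ i) := by
      rw [mul_add, ← e2, ← _root_.map_mul, hνeq, map_sub]
      ring
    have hcancel : γ i = γ' i + algebraMap (𝓞 K) K ν :=
      mul_left_cancel₀ hαK0 (e1.symm.trans h4.symm)
    have hrj : ∀ j, bK.repr (γ i) j = bK.repr (γ' i) j := by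
      intro j
      obtain ⟨z, hz⟩ := CountAux.int_coords K 𝔫 b bK hcompat hν𝔫 j
      have hrepr : bK.repr (γ i) j = bK.repr (γ' i) j + (z : ℚ) := by
        rw [hcancel, map_add, Finsupp.add_apply, hz]
      have h01 := hγ.1 i j
      have h01' := hγ'.1 i j
      rw [Set.mem_Ico] at h01 h01'
      have hz0 : z = 0 := by
        have hz1 : (-1 : ℚ) < (z : ℚ) := by linarith [h01.1, h01'.2]
        have hz2 : ((z : ℤ) : ℚ) < 1 := by linarith [h01.2, h01'.1]
        have hz1' : (-1 : ℤ) < z := by exact_mod_cast hz1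
        have hz2' : z < 1 := by exact_mod_cast hz2
        omega
      rw [hz0] at hrepr
      simpa using hrepr
    have hre : bK.repr (γ i) = bK.repr (γ' i) := Finsupp.ext hrj
    exact bK.repr.injective hre
  -- counting
  have hcount := Nat.card_le_card_of_injective _ hinj
  have hprod : Nat.card ({I : Ideal (𝓞 K) // I.IsPrincipal ∧ I ≠ ⊥ ∧ Ideal.absNorm I ≤ m}
        × (Fin T → Fin m))
      = Nat.card {I : Ideal (𝓞 K) // I.IsPrincipal ∧ I ≠ ⊥ ∧ Ideal.absNorm I ≤ m} * m ^ T := by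
    rw [Nat.card_prod, Nat.card_fun]
    congr 1
    rw [Nat.card_eq_fintype_card, Nat.card_eq_fintype_card, Fintype.card_fin, Fintype.card_fin]
  have hIdxle : (Nat.card {I : Ideal (𝓞 K) // I.IsPrincipal ∧ I ≠ ⊥ ∧ Ideal.absNorm I ≤ m} : ℝ)
      ≤ Cp * m := hCp m hm1
  have hScard : Set.ncard S = Nat.card S := (Nat.card_coe_set_eq S).symm
  have hmain : (Set.ncard S : ℝ)
      ≤ (Cp * m) * (m : ℝ) ^ T := by
    rw [hScard]
    calc (Nat.card S : ℝ)
        ≤ ((Nat.card {I : Ideal (𝓞 K) // I.IsPrincipal ∧ I ≠ ⊥ ∧ Ideal.absNorm I ≤ m}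
            * m ^ T : ℕ) : ℝ) := by exact_mod_cast le_of_le_of_eq hcount hprod
      _ = (Nat.card {I : Ideal (𝓞 K) // I.IsPrincipal ∧ I ≠ ⊥ ∧ Ideal.absNorm I ≤ m} : ℝ)
            * (m : ℝ) ^ T := by push_cast; ring
      _ ≤ (Cp * m) * (m : ℝ) ^ T :=
          mul_le_mul_of_nonneg_right hIdxle (by positivity)
  have hfinal : (Cp * m) * (m : ℝ) ^ T ≤ Cp * (B : ℝ) ^ (T + 1) * H ^ (T + 1) := by
    have hmm : (Cp * m) * (m : ℝ) ^ T = Cp * (m : ℝ) ^ (T + 1) := by ring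
    rw [hmm]
    have hple : (m : ℝ) ^ (T + 1) ≤ (H * B) ^ (T + 1) :=
      pow_le_pow_left₀ (by positivity) hmR (T + 1)
    calc Cp * (m : ℝ) ^ (T + 1) ≤ Cp * (H * B) ^ (T + 1) :=
          mul_le_mul_of_nonneg_left hple (le_of_lt hCp0)
      _ = Cp * (B : ℝ) ^ (T + 1) * H ^ (T + 1) := by ring
  exact le_trans hmain hfinal
end

section
/- Let $K$ be a number field of degree $n$ with integral ideal $\mathfrak{n}$, $\mathbb{Z}$-basis $\omega_1,\ldots,\omega_n$ of $\mathfrak{n}$, and coordinate sup-norm $|\cdot|$ on $V = K \otimes_\mathbb{Q} \mathbb{R}$. Fix $T \geq 1$ and reals $D \geq 1$, $\varpi \in (0, 1/3)$. For $\gamma \in (R \cap K)^T$ with denominator ideal $\mathfrak{a}_\gamma$ (the intersection of the componentwise denominator ideals), define the major arc $\mathfrak{M}_\gamma$ as the set of $\alpha \in R^T$ with $|\alpha_i - \gamma_i| \leq P^{-d_i + \varpi}$ (distance modulo $\mathfrak{n}$) for prescribed degrees $1 \leq d_i \leq D$. Then there exists $P_0$ (depending on $K$, $\mathfrak{n}$,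 the basis, $T$, $D$, $\varpi$) such that for all $P \geq P_0$: if $\gamma_1 \neq \gamma_2 \in (R \cap K)^T$ both satisfy $N(\mathfrak{a}_{\gamma_j}) \leq P^\varpi$, then $\mathfrak{M}_{\gamma_1} \cap \mathfrak{M}_{\gamma_2} = \emptyset$. -/
open NumberField

/-- The major arc `𝔐_γ` associated to `γ ∈ (R ∩ K)^T`: the set of `α ∈ R^T`
(coordinates with respect to the basis `bK` of `K`, extended to `V ≅ ℝ^n`) such
that for each `i` the distance modulo `𝔫` from `α i` to `γ i` is at most
`P^{-dᵢ+ϖ}` in the coordinate sup-norm; the lattice `𝔫` has integer coordinates. -/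
def majorArc {K : Type*} [Field K] [NumberField K] {n T : ℕ}
    (bK : Module.Basis (Fin n) ℚ K) (d : Fin T → ℕ) (ϖ P : ℝ) (γ : Fin T → K) :
    Set (Fin T → Fin n → ℝ) :=
  {α | (∀ i j, α i j ∈ Set.Ico (0 : ℝ) 1) ∧
    ∀ i, ∃ m : Fin n → ℤ,
      ‖(α i) - (fun j => ((bK.repr (γ i) j : ℚ) : ℝ)) - (fun j => (m j : ℝ))‖
        ≤ P ^ (-(d i : ℝ) + ϖ)}

lemma iInf_denomIdeal_ne_bot {K : Type*} [Field K] [NumberField K]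
    {𝔫 : Ideal (𝓞 K)} (h𝔫 : 𝔫 ≠ ⊥) {T : ℕ} (γ : Fin T → K) :
    (⨅ i, denomIdeal 𝔫 (γ i)) ≠ ⊥ := by
  obtain ⟨ν, hν, hν0⟩ := (Submodule.ne_bot_iff 𝔫).mp h𝔫
  choose p hp using fun i => IsLocalization.surj (nonZeroDivisors (𝓞 K)) (γ i)
  intro hbot
  have hmem : (∏ i, ν * ((p i).2 : 𝓞 K)) ∈ (⨅ i, denomIdeal 𝔫 (γ i)) := by
    rw [Submodule.mem_iInf]
    intro i
    have h1 : ν * ((p i).2 : 𝓞 K) ∈ denomIdeal 𝔫 (γ i) := by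
      rw [denomIdeal, Submodule.mem_comap]
      refine ⟨ν * (p i).1, Ideal.mul_mem_right _ _ hν, ?_⟩
      rw [Algebra.linearMap_apply, LinearMap.toSpanSingleton_apply, Algebra.smul_def,
        map_mul, map_mul, mul_assoc, mul_comm (algebraMap (𝓞 K) K ((p i).2 : 𝓞 K)) (γ i),
        hp i]
    rw [← Finset.mul_prod_erase Finset.univ _ (Finset.mem_univ i)]
    exact Ideal.mul_mem_right _ _ h1
  rw [hbot, Submodule.mem_bot] at hmem
  obtain ⟨i, -, hi⟩ := Finset.prod_eq_zero_iff.mp hmem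
  rcases mul_eq_zero.mp hi with h | h
  · exact hν0 h
  · exact nonZeroDivisors.coe_ne_zero _ h

set_option maxHeartbeats 1000000 in
/-- Distinct major arcs with denominator of norm at most `P^ϖ` are disjoint for
all sufficiently large `P`. -/
theorem major_arcs_disjoint (K : Type*) [Field K] [NumberField K]
    (n : ℕ) (𝔫 : Ideal (𝓞 K)) (h𝔫 : 𝔫 ≠ ⊥) (b : Module.Basis (Fin n) ℤ 𝔫)
    (bK : Module.Basis (Fin n) ℚ K)
    (hcompat : ∀ i, bK i = algebraMap (𝓞 K) K ((b i : 𝓞 K)))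
    (T : ℕ) (hT : 1 ≤ T) (D : ℝ) (hD : 1 ≤ D)
    (d : Fin T → ℕ) (hd : ∀ i, 1 ≤ d i ∧ (d i : ℝ) ≤ D)
    (ϖ : ℝ) (hϖ : ϖ ∈ Set.Ioo (0 : ℝ) (1 / 3)) :
    ∃ P₀ : ℝ, ∀ P : ℝ, P₀ ≤ P →
      ∀ γ₁ γ₂ : Fin T → K,
        (∀ i j, (bK.repr (γ₁ i) j : ℚ) ∈ Set.Ico (0 : ℚ) 1) →
        (∀ i j, (bK.repr (γ₂ i) j : ℚ) ∈ Set.Ico (0 : ℚ) 1) →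
        (Ideal.absNorm (⨅ i, denomIdeal 𝔫 (γ₁ i)) : ℝ) ≤ P ^ ϖ →
        (Ideal.absNorm (⨅ i, denomIdeal 𝔫 (γ₂ i)) : ℝ) ≤ P ^ ϖ →
        γ₁ ≠ γ₂ →
        majorArc bK d ϖ P γ₁ ∩ majorArc bK d ϖ P γ₂ = ∅ := by
  obtain ⟨hϖ0, hϖ3⟩ := hϖ
  have h13 : (0:ℝ) < 1 - 3 * ϖ := by linarith
  refine ⟨max 2 ((2:ℝ) ^ ((1:ℝ)/(1-3*ϖ)) + 1), ?_⟩
  intro P hP γ₁ γ₂ hr1 hr2 hN1le hN2le hne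
  have hP2 : (2:ℝ) ≤ P := le_trans (le_max_left _ _) hP
  have hP1 : (1:ℝ) ≤ P := by linarith
  have hP0 : (0:ℝ) < P := by linarith
  have hPe : (2:ℝ) ^ ((1:ℝ)/(1-3*ϖ)) < P :=
    lt_of_lt_of_le (lt_add_of_pos_right _ one_pos) (le_trans (le_max_right _ _) hP)
  have hPpow : (2:ℝ) < P ^ (1 - 3*ϖ) := by
    have h := Real.rpow_lt_rpow (Real.rpow_nonneg (by norm_num) _) hPe h13
    rwa [← Real.rpow_mul (by norm_num), one_div, inv_mul_cancel₀ (ne_of_gt h13),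
      Real.rpow_one] at h
  have hsmall : 2 * P ^ (3*ϖ - 1) < 1 := by
    have h3 : P ^ (3*ϖ-1) = (P ^ (1-3*ϖ))⁻¹ := by
      rw [← Real.rpow_neg hP0.le]; ring_nf
    rw [h3, ← div_eq_mul_inv, div_lt_one (lt_trans two_pos hPpow)]
    exact hPpow
  -- norms
  set N₁ : ℕ := Ideal.absNorm (⨅ i, denomIdeal 𝔫 (γ₁ i)) with hN₁def
  set N₂ : ℕ := Ideal.absNorm (⨅ i, denomIdeal 𝔫 (γ₂ i)) with hN₂def
  have hN₁0 : N₁ ≠ 0 := fun h =>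
    iInf_denomIdeal_ne_bot h𝔫 γ₁ (Ideal.absNorm_eq_zero_iff.mp h)
  have hN₂0 : N₂ ≠ 0 := fun h =>
    iInf_denomIdeal_ne_bot h𝔫 γ₂ (Ideal.absNorm_eq_zero_iff.mp h)
  refine Set.eq_empty_iff_forall_notMem.mpr ?_
  rintro α ⟨⟨hbox1, hα1⟩, ⟨hbox2, hα2⟩⟩
  apply hne
  funext i
  obtain ⟨m1, hm1⟩ := hα1 i
  obtain ⟨m2, hm2⟩ := hα2 i
  have hb1 : ∀ j, |α i j - ((bK.repr (γ₁ i) j : ℚ):ℝ) - (m1 j : ℝ)| ≤ P ^ (-(d i:ℝ) + ϖ) := by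
    intro j
    have h := norm_le_pi_norm
      ((α i) - (fun j => ((bK.repr (γ₁ i) j : ℚ) : ℝ)) - (fun j => ((m1 j : ℤ) : ℝ))) j
    simpa [Real.norm_eq_abs] using h.trans hm1
  have hb2 : ∀ j, |α i j - ((bK.repr (γ₂ i) j : ℚ):ℝ) - (m2 j : ℝ)| ≤ P ^ (-(d i:ℝ) + ϖ) := by
    intro j
    have h := norm_le_pi_norm
      ((α i) - (fun j => ((bK.repr (γ₂ i) j : ℚ) : ℝ)) - (fun j => ((m2 j : ℤ) : ℝ))) j
    simpa [Real.norm_eq_abs] using h.trans hm2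
  set Q : Fin n → ℚ := fun j =>
    bK.repr (γ₁ i) j - bK.repr (γ₂ i) j + ((m1 j - m2 j : ℤ) : ℚ) with hQdef
  have hQbound : ∀ j, |((Q j : ℚ) : ℝ)| ≤ 2 * P ^ (-(d i:ℝ) + ϖ) := by
    intro j
    have h1 := hb1 j
    have h2 := hb2 j
    rw [abs_le] at h1 h2 ⊢
    simp only [hQdef]
    push_cast
    constructor <;> linarith
  -- algebraic part
  set δ : K := γ₁ i - γ₂ i + ∑ j, ((m1 j - m2 j : ℤ)) • bK j with hδdef
  have hδrepr : ∀ j, bK.repr δ j = Q j := by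
    intro j
    simp only [hδdef, hQdef, map_add, map_sub, map_sum, map_zsmul, Module.Basis.repr_self,
      Finsupp.coe_add, Finsupp.coe_sub, Pi.add_apply, Pi.sub_apply,
      Finsupp.coe_finset_sum, Finset.sum_apply, Finsupp.coe_smul, Pi.smul_apply,
      Finsupp.single_apply]
    simp [smul_ite, Finset.sum_ite_eq']
  set M : Submodule (𝓞 K) K := Submodule.map (Algebra.linearMap (𝓞 K) K) 𝔫 with hMdef
  have hg1 : ((N₁ : 𝓞 K)) • γ₁ i ∈ M := by
    have h := (Submodule.mem_iInf _).mp (Ideal.absNorm_mem (⨅ i, denomIdeal 𝔫 (γ₁ i))) i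
    rw [denomIdeal, Submodule.mem_comap, LinearMap.toSpanSingleton_apply] at h
    exact h
  have hg2 : ((N₂ : 𝓞 K)) • γ₂ i ∈ M := by
    have h := (Submodule.mem_iInf _).mp (Ideal.absNorm_mem (⨅ i, denomIdeal 𝔫 (γ₂ i))) i
    rw [denomIdeal, Submodule.mem_comap, LinearMap.toSpanSingleton_apply] at h
    exact h
  have hκ : (∑ j, ((m1 j - m2 j : ℤ)) • bK j) ∈ M := by
    refine Submodule.sum_mem _ fun j _ => M.smul_of_tower_mem _ ?_
    rw [hcompat]
    exact Submodule.mem_map_of_mem (b j).2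
  have hmem : (((N₁ * N₂ : ℕ) : 𝓞 K)) • δ ∈ M := by
    have hsplit : (((N₁ * N₂ : ℕ) : 𝓞 K)) • δ
        = ((N₂ : 𝓞 K)) • (((N₁ : 𝓞 K)) • γ₁ i) - ((N₁ : 𝓞 K)) • (((N₂ : 𝓞 K)) • γ₂ i)
          + (((N₁ * N₂ : ℕ) : 𝓞 K)) • (∑ j, ((m1 j - m2 j : ℤ)) • bK j) := by
      rw [hδdef, smul_add, smul_sub, smul_smul, smul_smul]
      push_cast
      ring_nf
    rw [hsplit]
    exact Submodule.add_mem _ (Submodule.sub_mem _ (M.smul_mem _ hg1) (M.smul_mem _ hg2))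
      (M.smul_mem _ hκ)
  obtain ⟨ν, hν𝔫, hνeq⟩ := Submodule.mem_map.mp hmem
  set c : Fin n → ℤ := fun j => b.repr ⟨ν, hν𝔫⟩ j with hcdef
  have hν' : algebraMap (𝓞 K) K ν = ∑ j, (c j) • bK j := by
    have h := b.sum_repr ⟨ν, hν𝔫⟩
    have h2 : ν = ∑ j, (c j) • ((b j : 𝓞 K)) := by
      have := congrArg (Subtype.val) h
      exact this.symm.trans (by rw [Submodule.coe_sum]; rfl)
    rw [h2, map_sum]
    simp [hcompat, map_zsmul]
  have hrepr : ∀ j, (c j : ℚ) = ((N₁ * N₂ : ℕ) : ℚ) * Q j := by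
    intro j
    have h1 : bK.repr (algebraMap (𝓞 K) K ν) j = (c j : ℚ) := by
      rw [hν']
      simp only [map_sum, map_zsmul, Module.Basis.repr_self, Finsupp.coe_finset_sum,
        Finset.sum_apply, Finsupp.coe_smul, Pi.smul_apply, Finsupp.single_apply]
      simp [smul_ite, Finset.sum_ite_eq']
    have h2 : algebraMap (𝓞 K) K ν = ((N₁ * N₂ : ℕ)) • δ := by
      rw [← Nat.cast_smul_eq_nsmul (𝓞 K)]
      exact hνeq
    rw [h2] at h1
    rw [← h1, map_nsmul, Finsupp.coe_smul, Pi.smul_apply, nsmul_eq_mul, hδrepr j]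
  -- numeric conclusion
  have hzero : ∀ j, Q j = 0 := by
    intro j
    have hNN : ((N₁ * N₂ : ℕ) : ℝ) ≤ P ^ ϖ * P ^ ϖ := by
      push_cast
      exact mul_le_mul hN1le hN2le (Nat.cast_nonneg _) (Real.rpow_nonneg hP0.le _)
    have hcR : |((c j : ℤ) : ℝ)| ≤ (P ^ ϖ * P ^ ϖ) * (2 * P ^ (-(d i:ℝ) + ϖ)) := by
      have : ((c j : ℤ) : ℝ) = ((N₁ * N₂ : ℕ) : ℝ) * ((Q j : ℚ) : ℝ) := by
        have := hrepr j
        exact_mod_cast congrArg (fun q : ℚ => (q : ℝ)) this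
      rw [this, abs_mul, abs_of_nonneg (by positivity : (0:ℝ) ≤ ((N₁ * N₂ : ℕ) : ℝ))]
      exact mul_le_mul hNN (hQbound j) (abs_nonneg _) (by positivity)
    have hmono : P ^ (-(d i:ℝ) + ϖ) ≤ P ^ (-1 + ϖ) := by
      refine Real.rpow_le_rpow_of_exponent_le hP1 ?_
      have hd1 : (1:ℝ) ≤ (d i : ℝ) := by exact_mod_cast (hd i).1
      linarith
    have hchain : (P ^ ϖ * P ^ ϖ) * (2 * P ^ (-(d i:ℝ) + ϖ)) ≤ 2 * P ^ (3*ϖ - 1) := by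
      have h4 : (P ^ ϖ * P ^ ϖ) * (2 * P ^ (-1 + ϖ)) = 2 * P ^ (3*ϖ - 1) := by
        rw [show (P ^ ϖ * P ^ ϖ) * (2 * P ^ (-1 + ϖ))
            = 2 * (P ^ ϖ * P ^ ϖ * P ^ (-1 + ϖ)) by ring,
          ← Real.rpow_add hP0, ← Real.rpow_add hP0]
        congr 2
        ring
      calc (P ^ ϖ * P ^ ϖ) * (2 * P ^ (-(d i:ℝ) + ϖ))
          ≤ (P ^ ϖ * P ^ ϖ) * (2 * P ^ (-1 + ϖ)) := by
            have hp2 : (0:ℝ) ≤ P ^ ϖ * P ^ ϖ := by positivity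
            nlinarith [hmono]
        _ = 2 * P ^ (3*ϖ - 1) := h4
    have hlt : |((c j : ℤ) : ℝ)| < 1 := lt_of_le_of_lt (hcR.trans hchain) hsmall
    have hcz : c j = 0 := by
      have h5 : |c j| < 1 := by exact_mod_cast (by rwa [← Int.cast_abs] at hlt : ((|c j| : ℤ) : ℝ) < 1)
      exact Int.abs_lt_one_iff.mp h5
    have := hrepr j
    rw [hcz] at this
    have hNQ : ((N₁ * N₂ : ℕ) : ℚ) ≠ 0 := by
      exact_mod_cast Nat.mul_ne_zero hN₁0 hN₂0
    exact (mul_eq_zero.mp this.symm).resolve_left hNQ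
  -- coordinates equal
  have hcoord : ∀ j, bK.repr (γ₁ i) j = bK.repr (γ₂ i) j := by
    intro j
    have hQ0 := hzero j
    simp only [hQdef] at hQ0
    have hint : ((m2 j - m1 j : ℤ) : ℚ) = bK.repr (γ₁ i) j - bK.repr (γ₂ i) j := by
      push_cast at hQ0 ⊢
      linarith
    have h1 := hr1 i j
    have h2 := hr2 i j
    obtain ⟨h1a, h1b⟩ := h1
    obtain ⟨h2a, h2b⟩ := h2
    have habs : |((m2 j - m1 j : ℤ) : ℚ)| < 1 := by
      rw [abs_lt, hint]
      constructor <;> linarith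
    have hmz : m2 j - m1 j = 0 := by
      have h5 : |m2 j - m1 j| < 1 := by
        exact_mod_cast (by rwa [← Int.cast_abs] at habs : ((|m2 j - m1 j| : ℤ) : ℚ) < 1)
      exact Int.abs_lt_one_iff.mp h5
    rw [hmz] at hint
    push_cast at hint
    linarith
  have : bK.repr (γ₁ i) = bK.repr (γ₂ i) := Finsupp.ext hcoord
  exact bK.repr.injective this
end

section
/- Let $V$ be a finite-dimensional real vector space with a lattice $\Lambda$ and sup-norm $|\cdot|$ with respect to a $\mathbb{Z}$-basis of $\Lambda$. Let $f: V^s \to \mathbb{R}$, let $\Phi(x) = e^{2\pi i x}$, let $q$ be an $\mathbb{R}$-linear automorphism of $V$ preserving a sublattice structure (multiplication by a nonzero algebraic integer in the number field setting), and let $H \in \mathbb{Z}$ with $1 \leq H \ll P/|q|$ where $|q|$ bounds the operator. Then for any box $\mathcal{I}$ aligned to the basis, $\left|\sum_{x \in \Lambda^s \cap P\mathcal{I}} e^{2\pi i f(x)}\right|^2 \ll (P/H)^{ns} \sum_{h \in \Lambda^s,\ |h| < H} \left|\sum_{x \in \Lambda^s \cap P\mathcal{I}'(h)} e^{2\pi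 i (f(x + qh) - f(x))}\right|$, where each $\mathcal{I}'(h) \subseteq \mathcal{I}$ is a box aligned to the basis depending on $h$, $n = \dim V$, and the implied constant depends only on $V$, $\Lambda$, and $s$. -/
open scoped Real

/-- `e(t) = e^{2πit}`. -/
noncomputable def eChar (t : ℝ) : ℂ := Complex.exp (2 * Real.pi * Complex.I * t)

lemma eChar_mul_conj (s t : ℝ) :
    eChar s * (starRingEnd ℂ) (eChar t) = eChar (s - t) := by
  unfold eChar
  rw [← Complex.exp_conj, ← Complex.exp_add]
  congr 1
  simp only [map_mul, Complex.conj_I, Complex.conj_ofReal, map_ofNat]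
  push_cast
  ring

lemma box_iff {P xa r A B : ℝ} (hP : 0 < P) :
    (P * (A + max 0 (-r) / P) ≤ xa ∧ xa ≤ P * (B - max 0 r / P)) ↔
      ((P * A ≤ xa ∧ xa ≤ P * B) ∧ (P * A ≤ xa + r ∧ xa + r ≤ P * B)) := by
  have hPne : P ≠ 0 := ne_of_gt hP
  have h1 : P * (A + max 0 (-r) / P) = P * A + max 0 (-r) := by field_simp
  have h2 : P * (B - max 0 r / P) = P * B - max 0 r := by field_simp
  rw [h1, h2]
  constructor
  · rintro ⟨u1, u2⟩
    have m1 := le_max_left (0:ℝ) (-r); have m2 := le_max_right (0:ℝ) (-r)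
    have m3 := le_max_left (0:ℝ) r; have m4 := le_max_right (0:ℝ) r
    exact ⟨⟨by linarith, by linarith⟩, ⟨by linarith, by linarith⟩⟩
  · rintro ⟨⟨u1, u2⟩, u3, u4⟩
    have m1 : max 0 (-r) ≤ xa - P * A := max_le (by linarith) (by linarith)
    have m2 : max 0 r ≤ P * B - xa := max_le (by linarith) (by linarith)
    exact ⟨by linarith, by linarith⟩

set_option maxHeartbeats 1000000 in
/-- Lattice (van der Corput) differencing inequality: for the lattice `ℤ^n ⊆ ℝ^n`
(`s` copies), a linear automorphism `q` preserving the lattice, and `1 ≤ H ≪ P/‖q‖`,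
the square of an exponential sum over the lattice points of a dilated box is bounded
by `(P/H)^{ns}` times the sum over short lattice vectors `h` of differenced
exponential sums over sub-boxes `𝓘'(h) ⊆ 𝓘`. -/
theorem van_der_corput_differencing (n s : ℕ) (hn : 1 ≤ n) (hs : 1 ≤ s)
    (c₀ : ℝ) (hc₀ : 0 < c₀) :
    ∃ C : ℝ, 0 < C ∧
      ∀ (f : (Fin s → Fin n → ℝ) → ℝ) (q : (Fin n → ℝ) →L[ℝ] (Fin n → ℝ)),
        Function.Bijective q →
        (∀ m : Fin n → ℤ, ∃ m' : Fin n → ℤ,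
          q (fun j => (m j : ℝ)) = fun j => (m' j : ℝ)) →
        ∀ (H : ℤ) (P : ℝ), 1 ≤ H → 0 < P → (H : ℝ) ≤ c₀ * P / ‖q‖ →
        ∀ a b : Fin s → Fin n → ℝ,
          (∀ i j, -1 ≤ a i j ∧ a i j ≤ b i j ∧ b i j ≤ 1) →
        ∃ a' b' : (Fin s → Fin n → ℤ) → Fin s → Fin n → ℝ,
          (∀ h i j, a i j ≤ a' h i j ∧ b' h i j ≤ b i j) ∧
          ‖∑' x : Fin s → Fin n → ℤ,
              Set.indicator
                {x : Fin s → Fin n → ℤ |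
                  ∀ i j, P * a i j ≤ (x i j : ℝ) ∧ (x i j : ℝ) ≤ P * b i j}
                (fun x => eChar (f (fun i j => (x i j : ℝ)))) x‖ ^ 2
            ≤ C * (P / (H : ℝ)) ^ (n * s) *
              ∑' h : Fin s → Fin n → ℤ,
                Set.indicator
                  {h : Fin s → Fin n → ℤ | ∀ i j, |(h i j : ℝ)| < (H : ℝ)}
                  (fun h =>
                    ‖∑' x : Fin s → Fin n → ℤ,
                      Set.indicator
                        {x : Fin s → Fin n → ℤ |
                          ∀ i j, P * a' h i j ≤ (x i j : ℝ) ∧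
                            (x i j : ℝ) ≤ P * b' h i j}
                        (fun x => eChar
                          (f ((fun i j => (x i j : ℝ)) +
                                fun i => q (fun j => (h i j : ℝ))) -
                            f (fun i j => (x i j : ℝ)))) x‖) h := by
  classical
  refine ⟨(2 + 3 * c₀) ^ (n * s), by positivity, ?_⟩
  intro f q hqbij hqlat H P hH hP hHP a b hab
  -- basic facts
  have hj0 : Nonempty (Fin n) := ⟨⟨0, hn⟩⟩
  have hHR : (1 : ℝ) ≤ (H : ℝ) := by exact_mod_cast hH
  have hq1 : (1 : ℝ) ≤ ‖q‖ := by
    obtain ⟨m', hm'⟩ := hqlat (fun _ => 1)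
    set v : Fin n → ℝ := fun j => (((fun _ => (1:ℤ)) j : ℤ) : ℝ) with hv
    have hm'' : q v = fun j => (m' j : ℝ) := hm'
    have hvne : v ≠ 0 := by
      intro hc
      have := congrFun hc ⟨0, hn⟩
      simp [hv] at this
    have hqv : q v ≠ 0 := fun hc => hvne (hqbij.injective (by rw [hc, map_zero]))
    obtain ⟨j, hj⟩ : ∃ j, m' j ≠ 0 := by
      by_contra hcontra
      push_neg at hcontra
      exact hqv (by rw [hm'']; funext j; simp [hcontra j])
    have hvnorm : ‖v‖ = 1 := by
      have : v = fun _ : Fin n => (1:ℝ) := by funext j; simp [hv]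
      rw [this]; simp
    have h1 : (1:ℝ) ≤ ‖q v‖ := by
      calc (1:ℝ) ≤ |(m' j : ℝ)| := by
            rw [← Int.cast_abs]; exact_mod_cast Int.one_le_abs hj
        _ = ‖(q v) j‖ := by rw [hm'']; simp [Real.norm_eq_abs]
        _ ≤ ‖q v‖ := norm_le_pi_norm _ j
    calc (1:ℝ) ≤ ‖q v‖ := h1
      _ ≤ ‖q‖ * ‖v‖ := q.le_opNorm _
      _ = ‖q‖ := by rw [hvnorm, mul_one]
  have hqpos : (0:ℝ) < ‖q‖ := lt_of_lt_of_le one_pos hq1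
  have hqH : ‖q‖ * (H:ℝ) ≤ c₀ * P := by
    have := (le_div_iff₀ hqpos).mp hHP
    linarith
  have hPc : (1:ℝ) ≤ c₀ * P := le_trans hHR (hHP.trans (by
    apply div_le_self (by positivity) hq1))
  -- the integer version of q
  choose Q' hQ' using hqlat
  set Q : (Fin s → Fin n → ℤ) → (Fin s → Fin n → ℤ) := fun h i => Q' (h i) with hQdef
  have hQc : ∀ (h : Fin s → Fin n → ℤ) i j,
      ((Q h i j : ℤ) : ℝ) = q (fun j' => (h i j' : ℝ)) j := by
    intro h i j
    exact (congrFun (hQ' (h i)) j).symm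
  have hQsub : ∀ u v : Fin s → Fin n → ℤ, Q (u - v) = Q u - Q v := by
    intro u v
    funext i j
    have harg : (fun j' => (((u - v) i j' : ℤ) : ℝ))
        = (fun j' => ((u i j' : ℤ) : ℝ)) - (fun j' => ((v i j' : ℤ) : ℝ)) := by
      funext j'
      simp [Pi.sub_apply]
    have hreal : ((Q (u - v)) i j : ℝ) = ((Q u) i j : ℝ) - ((Q v) i j : ℝ) := by
      rw [hQc, hQc, hQc, harg, map_sub]
      simp [Pi.sub_apply]
    have : ((Q (u - v)) i j : ℝ) = (((Q u - Q v) i j : ℤ) : ℝ) := by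
      rw [hreal]; push_cast [Pi.sub_apply]; ring
    exact_mod_cast this
  -- sets and finsets
  set Bset : Set (Fin s → Fin n → ℤ) :=
    {x : Fin s → Fin n → ℤ |
      ∀ i j, P * a i j ≤ (x i j : ℝ) ∧ (x i j : ℝ) ≤ P * b i j} with hBsetdef
  set g : (Fin s → Fin n → ℤ) → ℂ :=
    Bset.indicator (fun x => eChar (f (fun i j => (x i j : ℝ)))) with hgdef
  set Bfin : Finset (Fin s → Fin n → ℤ) :=
    Fintype.piFinset fun i => Fintype.piFinset fun j =>
      Finset.Icc ⌈P * a i j⌉ ⌊P * b i j⌋ with hBfindef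
  have hBmem : ∀ x : Fin s → Fin n → ℤ, x ∈ Bset ↔ x ∈ Bfin := by
    intro x
    simp only [hBsetdef, Set.mem_setOf_eq, hBfindef, Fintype.mem_piFinset, Finset.mem_Icc,
      Int.ceil_le, Int.le_floor]
  set K : ℤ := ⌊(1 + c₀) * P⌋ with hKdef
  have hK0 : (0:ℤ) ≤ K := Int.floor_nonneg.mpr (by positivity)
  have hKle : (K : ℝ) ≤ (1 + c₀) * P := Int.floor_le _
  set Xfin : Finset (Fin s → Fin n → ℤ) :=
    Fintype.piFinset fun _ : Fin s => Fintype.piFinset fun _ : Fin n =>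
      Finset.Icc (-K) K with hXdef
  set U : Finset (Fin s → Fin n → ℤ) :=
    Fintype.piFinset fun _ : Fin s => Fintype.piFinset fun _ : Fin n =>
      Finset.Icc 0 (H - 1) with hUdef
  set Hbox : Finset (Fin s → Fin n → ℤ) :=
    Fintype.piFinset fun _ : Fin s => Fintype.piFinset fun _ : Fin n =>
      Finset.Icc (1 - H) (H - 1) with hHboxdef
  have hUmem : ∀ u : Fin s → Fin n → ℤ, u ∈ U ↔ ∀ i j, 0 ≤ u i j ∧ u i j ≤ H - 1 := by
    intro u; simp [hUdef, Fintype.mem_piFinset, Finset.mem_Icc]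
  have hXmem : ∀ x : Fin s → Fin n → ℤ, x ∈ Xfin ↔ ∀ i j, -K ≤ x i j ∧ x i j ≤ K := by
    intro x; simp [hXdef, Fintype.mem_piFinset, Finset.mem_Icc]
  have hHboxmem : ∀ h : Fin s → Fin n → ℤ,
      h ∈ Hbox ↔ ∀ i j, 1 - H ≤ h i j ∧ h i j ≤ H - 1 := by
    intro h; simp [hHboxdef, Fintype.mem_piFinset, Finset.mem_Icc]
  -- cardinalities
  have hUcard : (U.card : ℝ) = (H : ℝ) ^ (n * s) := by
    have h1 : U.card = ((H - 1 + 1 - 0 : ℤ).toNat) ^ (n * s) := by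
      rw [hUdef, Fintype.card_piFinset]
      simp only [Fintype.card_piFinset, Int.card_Icc, Finset.prod_const, Finset.card_univ,
        Fintype.card_fin]
      rw [← pow_mul, mul_comm n s]
    rw [h1, show H - 1 + 1 - 0 = H from by ring, Nat.cast_pow]
    congr 1
    exact_mod_cast Int.toNat_of_nonneg (by omega)
  have hXcard : (Xfin.card : ℝ) ≤ ((2 + 3 * c₀) * P) ^ (n * s) := by
    have h1 : Xfin.card = ((K + 1 - -K : ℤ).toNat) ^ (n * s) := by
      rw [hXdef, Fintype.card_piFinset]
      simp only [Fintype.card_piFinset, Int.card_Icc, Finset.prod_const, Finset.card_univ,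
        Fintype.card_fin]
      rw [← pow_mul, mul_comm n s]
    rw [h1]
    have h2 : (((K + 1 - -K : ℤ).toNat : ℕ) : ℝ) ≤ (2 + 3 * c₀) * P := by
      have h4 : (((K + 1 - -K : ℤ).toNat : ℕ) : ℤ) = K + 1 - -K :=
        Int.toNat_of_nonneg (by omega)
      have h5 : (((K + 1 - -K : ℤ).toNat : ℕ) : ℝ) = 2 * (K:ℝ) + 1 := by
        have := congrArg (fun z : ℤ => (z : ℝ)) h4
        push_cast at this
        linarith
      rw [h5]
      nlinarith [hKle, hPc, hP]
    calc ((((K + 1 - -K : ℤ).toNat : ℕ) ^ (n * s) : ℕ) : ℝ)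
        = (((K + 1 - -K : ℤ).toNat : ℕ) : ℝ) ^ (n * s) := by push_cast; ring
      _ ≤ ((2 + 3 * c₀) * P) ^ (n * s) := by
          apply pow_le_pow_left₀ (by positivity) h2
  -- membership bounds
  have hUabs : ∀ u ∈ U, ∀ i j, |(u i j : ℝ)| ≤ (H : ℝ) := by
    intro u hu i j
    obtain ⟨h1, h2⟩ := (hUmem u).mp hu i j
    rw [abs_le]
    constructor
    · exact_mod_cast (show -H ≤ u i j by omega)
    · exact_mod_cast (show u i j ≤ H by omega)
  have hQb : ∀ u : Fin s → Fin n → ℤ, (∀ i j, |(u i j : ℝ)| ≤ (H:ℝ)) →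
      ∀ i j, |((Q u) i j : ℝ)| ≤ c₀ * P := by
    intro u hu i j
    rw [hQc]
    have hnorm : ‖(fun j' => ((u i j' : ℤ) : ℝ) : Fin n → ℝ)‖ ≤ (H:ℝ) := by
      apply (pi_norm_le_iff_of_nonneg (by linarith)).mpr
      intro j'
      simpa [Real.norm_eq_abs] using hu i j'
    calc |q (fun j' => ((u i j' : ℤ):ℝ)) j|
        ≤ ‖q (fun j' => ((u i j' : ℤ):ℝ))‖ := by
          simpa [Real.norm_eq_abs] using norm_le_pi_norm (q (fun j' => ((u i j':ℤ):ℝ))) j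
      _ ≤ ‖q‖ * ‖(fun j' => ((u i j' : ℤ):ℝ) : Fin n → ℝ)‖ := q.le_opNorm _
      _ ≤ ‖q‖ * (H:ℝ) := by
          exact mul_le_mul_of_nonneg_left hnorm (norm_nonneg _)
      _ ≤ c₀ * P := hqH
  have hBabs : ∀ x ∈ Bset, ∀ i j, |(x i j : ℝ)| ≤ P := by
    intro x hx i j
    obtain ⟨h1, h2⟩ := hx i j
    obtain ⟨ha1, ha2, ha3⟩ := hab i j
    rw [abs_le]
    constructor <;> nlinarith
  have hsuppX : ∀ u : Fin s → Fin n → ℤ, (∀ i j, |(u i j : ℝ)| ≤ (H:ℝ)) →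
      ∀ x : Fin s → Fin n → ℤ, (x + Q u) ∈ Bset → x ∈ Xfin := by
    intro u hu x hx
    rw [hXmem]
    intro i j
    have h1 : |((x + Q u) i j : ℝ)| ≤ P := hBabs _ hx i j
    have h2 : |((Q u) i j : ℝ)| ≤ c₀ * P := hQb u hu i j
    have h3 : |(x i j : ℝ)| ≤ (1 + c₀) * P := by
      have he : (x i j : ℝ) = ((x + Q u) i j : ℝ) - ((Q u) i j : ℝ) := by
        push_cast [Pi.add_apply]; ring
      rw [he, abs_le]
      rw [abs_le] at h1 h2
      constructor <;> linarith [h1.1, h1.2, h2.1, h2.2]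
    rw [abs_le] at h3
    constructor
    · have h4 : (-(x i j) : ℤ) ≤ K := Int.le_floor.mpr (by push_cast; linarith [h3.1])
      omega
    · exact Int.le_floor.mpr h3.2
  -- summability
  have hgsummable : ∀ v : Fin s → Fin n → ℤ, Summable (fun x => g (x + v)) := by
    intro v
    apply summable_of_ne_finset_zero (s := Bfin.image (fun y => y - v))
    intro x hx
    by_contra hne
    apply hx
    have hmem : x + v ∈ Bset := by
      by_contra hm
      exact hne (by rw [hgdef]; exact Set.indicator_of_notMem hm _)
    rw [Finset.mem_image]
    exact ⟨x + v, (hBmem _).mp hmem, by simp⟩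
  -- step 1
  set G : (Fin s → Fin n → ℤ) → ℂ := fun x => ∑ u ∈ U, g (x + Q u) with hGdef
  have hstep1 : ∑' x, G x = (U.card : ℂ) * ∑' x, g x := by
    calc ∑' x, G x = ∑ u ∈ U, ∑' x, g (x + Q u) :=
          Summable.tsum_finsetSum (fun u _ => hgsummable (Q u))
      _ = ∑ u ∈ U, ∑' x, g x := by
          refine Finset.sum_congr rfl fun u _ => ?_
          have h := (Equiv.addRight (Q u)).tsum_eq g
          simpa only [Equiv.coe_addRight] using h
      _ = (U.card : ℂ) * ∑' x, g x := by rw [Finset.sum_const, nsmul_eq_mul]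
  have hGsupp : ∀ x ∉ Xfin, G x = 0 := by
    intro x hx
    apply Finset.sum_eq_zero
    intro u hu
    by_contra hne
    have hmem : x + Q u ∈ Bset := by
      by_contra hm
      exact hne (by rw [hgdef]; exact Set.indicator_of_notMem hm _)
    exact hx (hsuppX u (hUabs u hu) x hmem)
  have htsumG : ∑' x, G x = ∑ x ∈ Xfin, G x := tsum_eq_sum hGsupp
  -- Cauchy-Schwarz
  have hCS : ‖∑ x ∈ Xfin, G x‖ ^ 2 ≤ (Xfin.card : ℝ) * ∑ x ∈ Xfin, ‖G x‖ ^ 2 := by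
    calc ‖∑ x ∈ Xfin, G x‖ ^ 2 ≤ (∑ x ∈ Xfin, ‖G x‖) ^ 2 := by
          apply pow_le_pow_left₀ (norm_nonneg _) (norm_sum_le _ _)
      _ ≤ (Xfin.card : ℝ) * ∑ x ∈ Xfin, ‖G x‖ ^ 2 := sq_sum_le_card_mul_sum_sq
  -- the differenced sums
  set W : (Fin s → Fin n → ℤ) → ℂ :=
    fun h => ∑' x, g (x + Q h) * (starRingEnd ℂ) (g x) with hWdef
  have hprod : ∀ u ∈ U, ∀ u' ∈ U,
      ∑ x ∈ Xfin, g (x + Q u) * (starRingEnd ℂ) (g (x + Q u')) = W (u - u') := by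
    intro u hu u' hu'
    have hvanish : ∀ x ∉ Xfin, g (x + Q u) * (starRingEnd ℂ) (g (x + Q u')) = 0 := by
      intro x hx
      by_contra hne
      have h1 : g (x + Q u) ≠ 0 := fun h0 => hne (by rw [h0, zero_mul])
      have hmem : x + Q u ∈ Bset := by
        by_contra hm
        exact h1 (by rw [hgdef]; exact Set.indicator_of_notMem hm _)
      exact hx (hsuppX u (hUabs u hu) x hmem)
    rw [← tsum_eq_sum (L := SummationFilter.unconditional _) hvanish]
    calc ∑' x, g (x + Q u) * (starRingEnd ℂ) (g (x + Q u'))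
        = ∑' x, (fun y => g (y + Q (u - u')) * (starRingEnd ℂ) (g y))
            ((Equiv.addRight (Q u')) x) := by
          refine tsum_congr fun x => ?_
          simp only [Equiv.coe_addRight]
          rw [hQsub, show x + Q u' + (Q u - Q u') = x + Q u from by abel]
      _ = ∑' y, g (y + Q (u - u')) * (starRingEnd ℂ) (g y) :=
            (Equiv.addRight (Q u')).tsum_eq
              (fun y => g (y + Q (u - u')) * (starRingEnd ℂ) (g y))
      _ = W (u - u') := by simp only [hWdef]
  have hexp : ((∑ x ∈ Xfin, ‖G x‖ ^ 2 : ℝ) : ℂ) = ∑ p ∈ U ×ˢ U, W (p.1 - p.2) := by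
    rw [Finset.sum_product]
    push_cast
    calc ∑ x ∈ Xfin, ((‖G x‖ : ℂ) ^ 2)
        = ∑ x ∈ Xfin, G x * (starRingEnd ℂ) (G x) := by
          refine Finset.sum_congr rfl fun x _ => ?_
          rw [Complex.mul_conj]
          norm_cast
          rw [Complex.sq_norm]
      _ = ∑ x ∈ Xfin, ∑ u ∈ U, ∑ u' ∈ U, g (x + Q u) * (starRingEnd ℂ) (g (x + Q u')) := by
          refine Finset.sum_congr rfl fun x _ => ?_
          rw [hGdef]
          simp only
          rw [map_sum, Finset.sum_mul_sum]
      _ = ∑ u ∈ U, ∑ u' ∈ U, ∑ x ∈ Xfin, g (x + Q u) * (starRingEnd ℂ) (g (x + Q u')) := by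
          rw [Finset.sum_comm]
          refine Finset.sum_congr rfl fun u _ => ?_
          rw [Finset.sum_comm]
      _ = ∑ u ∈ U, ∑ u' ∈ U, W (u - u') :=
          Finset.sum_congr rfl fun u hu => Finset.sum_congr rfl fun u' hu' => hprod u hu u' hu'
  have hreal : ∑ x ∈ Xfin, ‖G x‖ ^ 2 ≤ ∑ p ∈ U ×ˢ U, ‖W (p.1 - p.2)‖ := by
    have h1 : ∑ x ∈ Xfin, ‖G x‖ ^ 2 = (∑ p ∈ U ×ˢ U, W (p.1 - p.2)).re := by
      rw [← hexp, Complex.ofReal_re]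
    rw [h1]
    calc (∑ p ∈ U ×ˢ U, W (p.1 - p.2)).re
        ≤ ‖∑ p ∈ U ×ˢ U, W (p.1 - p.2)‖ := by
          exact Complex.re_le_norm _
      _ ≤ ∑ p ∈ U ×ˢ U, ‖W (p.1 - p.2)‖ := norm_sum_le _ _
  have hstep4 : ∑ p ∈ U ×ˢ U, ‖W (p.1 - p.2)‖ ≤ (U.card : ℝ) * ∑ h ∈ Hbox, ‖W h‖ := by
    rw [Finset.sum_product]
    calc ∑ u ∈ U, ∑ u' ∈ U, ‖W (u - u')‖
        ≤ ∑ _u ∈ U, ∑ h ∈ Hbox, ‖W h‖ := by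
          refine Finset.sum_le_sum fun u hu => ?_
          have himg : ∑ u' ∈ U, ‖W (u - u')‖ = ∑ h ∈ U.image (fun u' => u - u'), ‖W h‖ := by
            rw [Finset.sum_image]
            intro x _ y _ hxy
            simpa using hxy
          rw [himg]
          refine Finset.sum_le_sum_of_subset_of_nonneg ?_ (fun h _ _ => norm_nonneg _)
          intro h hh
          rw [Finset.mem_image] at hh
          obtain ⟨u', hu', rfl⟩ := hh
          rw [hHboxmem]
          intro i j
          have h1 := (hUmem u).mp hu i j
          have h2 := (hUmem u').mp hu' i j
          simp only [Pi.sub_apply]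
          omega
      _ = (U.card : ℝ) * ∑ h ∈ Hbox, ‖W h‖ := by rw [Finset.sum_const, nsmul_eq_mul]
  -- choice of the sub-boxes
  refine ⟨fun h i j => a i j + max 0 (-(q (fun j' => (h i j' : ℝ)) j)) / P,
          fun h i j => b i j - max 0 (q (fun j' => (h i j' : ℝ)) j) / P,
          fun h i j => ⟨le_add_of_nonneg_right (div_nonneg (le_max_left _ _) hP.le),
            sub_le_self _ (div_nonneg (le_max_left _ _) hP.le)⟩, ?_⟩
  -- identification of the inner sums
  have hsetiff : ∀ (h x : Fin s → Fin n → ℤ),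
      (∀ i j, P * (a i j + max 0 (-(q (fun j' => (h i j' : ℝ)) j)) / P) ≤ (x i j : ℝ) ∧
          (x i j : ℝ) ≤ P * (b i j - max 0 (q (fun j' => (h i j' : ℝ)) j) / P)) ↔
        (x ∈ Bset ∧ x + Q h ∈ Bset) := by
    intro h x
    have hpt : ∀ i j,
        ((P * (a i j + max 0 (-(q (fun j' => (h i j' : ℝ)) j)) / P) ≤ (x i j : ℝ) ∧
          (x i j : ℝ) ≤ P * (b i j - max 0 (q (fun j' => (h i j' : ℝ)) j) / P)) ↔
        ((P * a i j ≤ (x i j : ℝ) ∧ (x i j : ℝ) ≤ P * b i j) ∧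
          (P * a i j ≤ ((x + Q h) i j : ℝ) ∧ ((x + Q h) i j : ℝ) ≤ P * b i j))) := by
      intro i j
      have hr : ((x + Q h) i j : ℝ) = (x i j : ℝ) + q (fun j' => (h i j' : ℝ)) j := by
        push_cast [Pi.add_apply]
        rw [hQc]
      rw [hr]
      exact box_iff hP
    constructor
    · intro hx
      constructor
      · intro i j; exact ((hpt i j).mp (hx i j)).1
      · intro i j; exact ((hpt i j).mp (hx i j)).2
    · intro hx i j
      exact (hpt i j).mpr ⟨hx.1 i j, hx.2 i j⟩
  have hinner : ∀ h : Fin s → Fin n → ℤ,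
      (∑' x : Fin s → Fin n → ℤ,
        Set.indicator
          {x : Fin s → Fin n → ℤ |
            ∀ i j, P * (a i j + max 0 (-(q (fun j' => (h i j' : ℝ)) j)) / P) ≤ (x i j : ℝ) ∧
              (x i j : ℝ) ≤ P * (b i j - max 0 (q (fun j' => (h i j' : ℝ)) j) / P)}
          (fun x => eChar
            (f ((fun i j => (x i j : ℝ)) + fun i => q (fun j => (h i j : ℝ))) -
              f (fun i j => (x i j : ℝ)))) x) = W h := by
    intro h
    simp only [hWdef]
    refine tsum_congr fun x => ?_
    have hco : ((fun i j => ((x i j : ℤ) : ℝ)) + fun i => q (fun j => ((h i j : ℤ) : ℝ)))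
        = (fun i j => (((x + Q h) i j : ℤ) : ℝ)) := by
      funext i j
      simp only [Pi.add_apply]
      push_cast
      rw [hQc]
    have hset : {x : Fin s → Fin n → ℤ |
        ∀ i j, P * (a i j + max 0 (-(q (fun j' => (h i j' : ℝ)) j)) / P) ≤ (x i j : ℝ) ∧
          (x i j : ℝ) ≤ P * (b i j - max 0 (q (fun j' => (h i j' : ℝ)) j) / P)}
        = {x : Fin s → Fin n → ℤ | x ∈ Bset ∧ x + Q h ∈ Bset} :=
      Set.ext fun x => (hsetiff h x)
    rw [hset, hgdef]
    simp only [Set.indicator_apply, Set.mem_setOf_eq]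
    by_cases h1 : x ∈ Bset
    · by_cases h2 : x + Q h ∈ Bset
      · rw [if_pos (⟨h1, h2⟩ : x ∈ Bset ∧ x + Q h ∈ Bset), if_pos h1, if_pos h2, hco,
          eChar_mul_conj]
      · rw [if_neg (fun hc : x ∈ Bset ∧ x + Q h ∈ Bset => h2 hc.2), if_neg h2, zero_mul]
    · rw [if_neg (fun hc : x ∈ Bset ∧ x + Q h ∈ Bset => h1 hc.1), if_neg h1, map_zero, mul_zero]
  -- rewrite the outer sum over h
  have hRHS : ∑' h : Fin s → Fin n → ℤ,
      Set.indicator {h : Fin s → Fin n → ℤ | ∀ i j, |(h i j : ℝ)| < (H : ℝ)}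
        (fun h =>
          ‖∑' x : Fin s → Fin n → ℤ,
            Set.indicator
              {x : Fin s → Fin n → ℤ |
                ∀ i j, P * (a i j + max 0 (-(q (fun j' => (h i j' : ℝ)) j)) / P) ≤ (x i j : ℝ) ∧
                  (x i j : ℝ) ≤ P * (b i j - max 0 (q (fun j' => (h i j' : ℝ)) j) / P)}
              (fun x => eChar
                (f ((fun i j => (x i j : ℝ)) + fun i => q (fun j => (h i j : ℝ))) -
                  f (fun i j => (x i j : ℝ)))) x‖) h
      = ∑ h ∈ Hbox, ‖W h‖ := by
    rw [tsum_eq_sum (s := Hbox) ?_]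
    · refine Finset.sum_congr rfl fun h hh => ?_
      rw [Set.indicator_of_mem]
      · rw [hinner h]
      · intro i j
        have h1 := (hHboxmem h).mp hh i j
        rw [abs_lt]
        constructor
        · exact_mod_cast (show -H < h i j by omega)
        · exact_mod_cast (show h i j < H by omega)
    · intro h hh
      apply Set.indicator_of_notMem
      intro hc
      apply hh
      rw [hHboxmem]
      intro i j
      have := hc i j
      rw [abs_lt] at this
      have h1 : -H < h i j := by exact_mod_cast this.1
      have h2 : h i j < H := by exact_mod_cast this.2
      omega
  rw [hRHS]
  -- final assembly
  have hsum_nn : (0:ℝ) ≤ ∑ h ∈ Hbox, ‖W h‖ := Finset.sum_nonneg fun h _ => norm_nonneg _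
  have hHN : (0:ℝ) < (H : ℝ) ^ (n * s) := pow_pos (by linarith) _
  have hchain : ((H:ℝ) ^ (n * s)) ^ 2 * ‖∑' x, g x‖ ^ 2
      ≤ ((2 + 3 * c₀) * P) ^ (n * s) * ((H:ℝ) ^ (n * s) * ∑ h ∈ Hbox, ‖W h‖) := by
    have e1 : (U.card : ℝ) * ‖∑' x, g x‖ = ‖∑ x ∈ Xfin, G x‖ := by
      rw [← htsumG, hstep1, norm_mul]
      norm_num
    calc ((H:ℝ) ^ (n * s)) ^ 2 * ‖∑' x, g x‖ ^ 2
        = ((U.card : ℝ) * ‖∑' x, g x‖) ^ 2 := by rw [hUcard]; ring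
      _ = ‖∑ x ∈ Xfin, G x‖ ^ 2 := by rw [e1]
      _ ≤ (Xfin.card : ℝ) * ∑ x ∈ Xfin, ‖G x‖ ^ 2 := hCS
      _ ≤ (Xfin.card : ℝ) * ∑ p ∈ U ×ˢ U, ‖W (p.1 - p.2)‖ := by
          exact mul_le_mul_of_nonneg_left hreal (Nat.cast_nonneg _)
      _ ≤ (Xfin.card : ℝ) * ((U.card : ℝ) * ∑ h ∈ Hbox, ‖W h‖) := by
          apply mul_le_mul_of_nonneg_left hstep4 (Nat.cast_nonneg _)
      _ ≤ ((2 + 3 * c₀) * P) ^ (n * s) * ((H:ℝ) ^ (n * s) * ∑ h ∈ Hbox, ‖W h‖) := by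
          rw [hUcard]
          exact mul_le_mul_of_nonneg_right hXcard (mul_nonneg hHN.le hsum_nn)
  have hfinal : ‖∑' x, g x‖ ^ 2
      ≤ (2 + 3 * c₀) ^ (n * s) * (P / (H:ℝ)) ^ (n * s) * ∑ h ∈ Hbox, ‖W h‖ := by
    have hAe : (2 + 3 * c₀) ^ (n * s) * (P / (H:ℝ)) ^ (n * s)
        = ((2 + 3 * c₀) * P) ^ (n * s) / (H:ℝ) ^ (n * s) := by
      rw [mul_pow, div_pow, mul_div_assoc]
    rw [hAe, div_mul_eq_mul_div, le_div_iff₀ hHN]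
    nlinarith [hchain, hHN, hsum_nn]
  exact hfinal
end
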